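/- arXiv:1709.01273 — 7 statements merged into one kernel-verified Lean document; each statement's English description precedes it below -/
import Mathlib

section
/- Let n ≥ 1, let G be a simple graph on {1,…,n} with neighbor sets N_i, and let X_d, X'_d ∈ ℝ^n with X_{di} > X'_{di} for all i. Suppose B_{ij} = B_{ji} < 0 whenever i ≠ j are adjacent in G, B_{ij} = 0 whenever i ≠ j are not adjacent, and set B_{ii} = Σ_{j∈N_i} B_{ij}. Then for every δ ∈ ℝ^n the symmetric n×n real matrix E(δ) with entries E_{ii} = 1/(X_{di} − X'_{di}) − B_{ii} and E_{ij} = B_{ij}·cos(δ_i − δ_j) for i ≠ j is positive definite, i.e., vᵀ E(δ) v > 0 for every nonzero v ∈ ℝ^n. -/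
open Finset

/-- For a simple graph `G` on `Fin n` with line susceptances `B i j < 0`
(symmetric) on edges, `B i j = 0` for distinct non-adjacent pairs,
self-susceptances `B i i = ∑_{j ∈ N_i} B i j`, and reactances `Xd i > Xd' i`,
the matrix `E(δ)` with `E i i = 1/(Xd i - Xd' i) - B i i` and
`E i j = B i j * cos (δ i - δ j)` for `i ≠ j` is positive definite for every `δ`. -/
theorem stmt0 (n : ℕ) (hn : 1 ≤ n) (G : SimpleGraph (Fin n)) [DecidableRel G.Adj]
    (Xd Xd' : Fin n → ℝ) (hX : ∀ i, Xd' i < Xd i)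
    (B : Fin n → Fin n → ℝ)
    (hBsym : ∀ i j, G.Adj i j → B i j = B j i)
    (hBneg : ∀ i j, G.Adj i j → B i j < 0)
    (hBzero : ∀ i j, i ≠ j → ¬ G.Adj i j → B i j = 0)
    (hBii : ∀ i, B i i = ∑ j ∈ G.neighborFinset i, B i j) :
    ∀ (δ : Fin n → ℝ) (v : Fin n → ℝ), v ≠ 0 →
      0 < ∑ i, ∑ j, v i *
          (if i = j then 1 / (Xd i - Xd' i) - B i i
           else B i j * Real.cos (δ i - δ j)) * v j := by
  intro δ v hv
  -- pointwise decomposition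
  have key : ∀ i j : Fin n, v i *
          (if i = j then 1 / (Xd i - Xd' i) - B i i
           else B i j * Real.cos (δ i - δ j)) * v j
      = (if i = j then v i ^ 2 * (1 / (Xd i - Xd' i)) - v i ^ 2 * B i i else 0)
        + (if G.Adj i j then B i j * (v i * v j * Real.cos (δ i - δ j)) else 0) := by
    intro i j
    by_cases h : i = j
    · subst h
      rw [if_pos rfl, if_pos rfl, if_neg (G.irrefl)]
      ring
    · rw [if_neg h, if_neg h]
      by_cases hadj : G.Adj i j
      · rw [if_pos hadj]; ring
      · rw [if_neg hadj, hBzero i j h hadj]; ring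
  set S : ℝ := ∑ i, ∑ j, (if G.Adj i j then
      B i j * (v i * v j * Real.cos (δ i - δ j) - v i ^ 2) else 0) with hS
  have hQ : (∑ i, ∑ j, v i *
          (if i = j then 1 / (Xd i - Xd' i) - B i i
           else B i j * Real.cos (δ i - δ j)) * v j)
      = (∑ i, v i ^ 2 * (1 / (Xd i - Xd' i))) + S := by
    rw [hS, ← Finset.sum_add_distrib]
    refine Finset.sum_congr rfl fun i _ => ?_
    have h1 : (∑ j, v i *
          (if i = j then 1 / (Xd i - Xd' i) - B i i
           else B i j * Real.cos (δ i - δ j)) * v j)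
        = (∑ j, ((if i = j then v i ^ 2 * (1 / (Xd i - Xd' i)) - v i ^ 2 * B i i else 0)
            + (if G.Adj i j then B i j * (v i * v j * Real.cos (δ i - δ j)) else 0))) :=
      Finset.sum_congr rfl fun j _ => key i j
    rw [h1, Finset.sum_add_distrib, Finset.sum_ite_eq Finset.univ i
      (fun _ => v i ^ 2 * (1 / (Xd i - Xd' i)) - v i ^ 2 * B i i), if_pos (Finset.mem_univ i)]
    have h2 : v i ^ 2 * B i i = ∑ j, (if G.Adj i j then v i ^ 2 * B i j else 0) := by
      rw [hBii i, Finset.mul_sum]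
      rw [show G.neighborFinset i = Finset.univ.filter (G.Adj i) by
        ext x; simp [SimpleGraph.mem_neighborFinset]]
      rw [Finset.sum_filter]
    rw [h2]
    have h3 : (∑ j, if G.Adj i j then B i j * (v i * v j * Real.cos (δ i - δ j) - v i ^ 2) else 0)
        = (∑ j, if G.Adj i j then B i j * (v i * v j * Real.cos (δ i - δ j)) else 0)
          - ∑ j, (if G.Adj i j then v i ^ 2 * B i j else 0) := by
      rw [← Finset.sum_sub_distrib]
      exact Finset.sum_congr rfl fun j _ => by split <;> ring
    rw [h3]; ring
  rw [hQ]
  -- diagonal part positive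
  have hD : 0 < ∑ i, v i ^ 2 * (1 / (Xd i - Xd' i)) := by
    obtain ⟨i₀, hi₀⟩ : ∃ i, v i ≠ 0 := by
      by_contra h; push_neg at h; exact hv (funext h)
    refine Finset.sum_pos' (fun i _ => ?_) ⟨i₀, Finset.mem_univ i₀, ?_⟩
    · have h0 : 0 < 1 / (Xd i - Xd' i) := one_div_pos.mpr (by have := hX i; linarith)
      exact mul_nonneg (sq_nonneg _) h0.le
    · have h1 : 0 < v i₀ ^ 2 :=
        lt_of_le_of_ne (sq_nonneg _) (Ne.symm (pow_ne_zero 2 hi₀))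
      have h2 : 0 < 1 / (Xd i₀ - Xd' i₀) := one_div_pos.mpr (by have := hX i₀; linarith)
      exact mul_pos h1 h2
  -- off-diagonal part nonneg
  have hSswap : S = ∑ i, ∑ j, (if G.Adj i j then
      B i j * (v i * v j * Real.cos (δ i - δ j) - v j ^ 2) else 0) := by
    rw [hS, Finset.sum_comm]
    refine Finset.sum_congr rfl fun j _ => Finset.sum_congr rfl fun i _ => ?_
    by_cases hadj : G.Adj i j
    · rw [if_pos hadj, if_pos hadj.symm, hBsym i j hadj,
        show δ i - δ j = -(δ j - δ i) by ring, Real.cos_neg]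
      ring
    · rw [if_neg hadj, if_neg (fun h => hadj h.symm)]
  have h2S : 0 ≤ S + S := by
    nth_rewrite 2 [hSswap]
    nth_rewrite 1 [hS]
    rw [← Finset.sum_add_distrib]
    refine Finset.sum_nonneg fun i _ => ?_
    rw [← Finset.sum_add_distrib]
    refine Finset.sum_nonneg fun j _ => ?_
    by_cases hadj : G.Adj i j
    · rw [if_pos hadj, if_pos hadj]
      have hB := hBneg i j hadj
      have hc1 : Real.cos (δ i - δ j) ≤ 1 := Real.cos_le_one _
      have hc2 : -1 ≤ Real.cos (δ i - δ j) := Real.neg_one_le_cos _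
      nlinarith [mul_nonneg (by linarith : (0:ℝ) ≤ 1 - Real.cos (δ i - δ j)) (sq_nonneg (v i + v j)),
        mul_nonneg (by linarith : (0:ℝ) ≤ 1 + Real.cos (δ i - δ j)) (sq_nonneg (v i - v j))]
    · simp [hadj]
  linarith
end

section
/- (Steady state frequency) Let n ≥ 1 and let G be a CONNECTED simple graph on {1,…,n} with neighbor sets N_i, with B_{ij} = B_{ji} for adjacent i,j. Let K_{pi} > 0 and R_i > 0 for all i, and let δ, V, f̄, P̄_t, P̄_g, ū, P_d ∈ ℝ^n be constants satisfying: (i) f̄_i = f̄_j for every edge {i,j} of G; (ii) 0 = −f̄_i + K_{pi}(P̄_{ti} − P_{di} + Σ_{j∈N_i} V_i V_j B_{ij} sin(δ_i − δ_j)) for every i; (iii) 0 = −P̄_{ti} + P̄_{gi} for every i; (iv) 0 = −f̄_i/R_i − P̄_{gi} + ū_i for every i. Then f̄_i = f* for every i, where f* = (Σ_{j=1}^n (ū_j − P_{dj})) / (Σ_{j=1}^n (1/K_{pj} + 1/R_j)). -/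
open Finset

/-- Steady state frequency: at a steady state of the power network with
turbine-governor dynamics on a connected graph, the frequency deviation of each area equals
`f* = (∑ j, (u j - Pd j)) / (∑ j, (1/Kp j + 1/R j))`. -/
theorem stmt2 (n : ℕ) (hn : 1 ≤ n) (G : SimpleGraph (Fin n)) [DecidableRel G.Adj]
    (hGconn : G.Connected)
    (B : Fin n → Fin n → ℝ) (hBsym : ∀ i j, G.Adj i j → B i j = B j i)
    (Kp R : Fin n → ℝ) (hKp : ∀ i, 0 < Kp i) (hR : ∀ i, 0 < R i)
    (δ V fbar Pt Pg u Pd : Fin n → ℝ)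
    (h1 : ∀ i j, G.Adj i j → fbar i = fbar j)
    (h2 : ∀ i, 0 = -fbar i + Kp i * (Pt i - Pd i +
      ∑ j ∈ G.neighborFinset i, V i * V j * B i j * Real.sin (δ i - δ j)))
    (h3 : ∀ i, 0 = -Pt i + Pg i)
    (h4 : ∀ i, 0 = -(fbar i / R i) - Pg i + u i) :
    ∀ i, fbar i = (∑ j, (u j - Pd j)) / (∑ j, (1 / Kp j + 1 / R j)) := by
  have hconst : ∀ i j : Fin n, fbar i = fbar j := by
    intro i j
    obtain ⟨w⟩ := hGconn i j
    induction w with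
    | nil => rfl
    | cons h p ih => exact (h1 _ _ h).trans ih
  intro i
  set F : Fin n → Fin n → ℝ := fun a b => V a * V b * B a b * Real.sin (δ a - δ b) with hF
  have hanti : ∀ a b, G.Adj a b → F a b = -F b a := by
    intro a b hab
    simp only [hF]
    rw [hBsym a b hab]
    have hs : Real.sin (δ a - δ b) = - Real.sin (δ b - δ a) := by
      rw [← Real.sin_neg]; ring_nf
    rw [hs]; ring
  have hS : ∑ a, ∑ b ∈ G.neighborFinset a, F a b = 0 := by
    have key : ∑ a, ∑ b ∈ G.neighborFinset a, F a b
        = -∑ a, ∑ b ∈ G.neighborFinset a, F a b := by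
      calc ∑ a, ∑ b ∈ G.neighborFinset a, F a b
          = ∑ a, ∑ b, if G.Adj a b then F a b else 0 := by
            simp [SimpleGraph.neighborFinset_eq_filter, Finset.sum_filter]
        _ = ∑ b, ∑ a, if G.Adj a b then F a b else 0 := Finset.sum_comm
        _ = ∑ a, ∑ b, -(if G.Adj a b then F a b else 0) := by
            refine sum_congr rfl fun a _ => sum_congr rfl fun b _ => ?_
            by_cases h : G.Adj a b
            · simp only [h, h.symm, if_true]
              exact hanti b a h.symm
            · rw [if_neg (fun hba => h (G.adj_symm hba)), if_neg h, neg_zero]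
        _ = -∑ a, ∑ b ∈ G.neighborFinset a, F a b := by
            simp [SimpleGraph.neighborFinset_eq_filter, Finset.sum_filter]
    linarith
  have hj : ∀ j, fbar j * (1 / Kp j + 1 / R j)
      = u j - Pd j + ∑ b ∈ G.neighborFinset j, F j b := by
    intro j
    have hPt : Pg j = Pt j := by linarith [h3 j]
    have hu : u j = fbar j / R j + Pt j := by
      have := h4 j; linarith
    have hf : fbar j = Kp j * (Pt j - Pd j + ∑ b ∈ G.neighborFinset j, F j b) := by
      have := h2 j; linarith
    rw [hu, hf]
    field_simp [(hKp j).ne', (hR j).ne']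
    ring
  have hsum : (∑ j, fbar j * (1 / Kp j + 1 / R j)) = ∑ j, (u j - Pd j) := by
    rw [show (∑ j, fbar j * (1 / Kp j + 1 / R j))
        = ∑ j, (u j - Pd j + ∑ b ∈ G.neighborFinset j, F j b) from
      sum_congr rfl fun j _ => hj j]
    rw [Finset.sum_add_distrib, hS, add_zero]
  have hLHS : (∑ j, fbar j * (1 / Kp j + 1 / R j))
      = fbar i * ∑ j, (1 / Kp j + 1 / R j) := by
    rw [Finset.mul_sum]
    exact sum_congr rfl fun j _ => by rw [hconst j i]
  have hDpos : 0 < ∑ j, (1 / Kp j + 1 / R j) := by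
    have : Nonempty (Fin n) := ⟨⟨0, hn⟩⟩
    refine Finset.sum_pos (fun j _ => ?_) Finset.univ_nonempty
    have := hKp j
    have := hR j
    positivity
  rw [eq_div_iff hDpos.ne', ← hLHS, hsum]
end

section
/- (Local minimum of the incremental storage function) Let n ≥ 1, let G be a simple graph on {1,…,n} with neighbor sets N_i and edge set E(G), let X_{di} > X'_{di}, B_{ij} = B_{ji} < 0 for adjacent i ≠ j (B_{ij} = 0 otherwise), B_{ii} = Σ_{j∈N_i} B_{ij}, and T_{pi} > 0, K_{pi} > 0 for all i. Let (δ̄, f̄, V̄) ∈ ℝ^{3n} be such that: V̄_i > 0 for all i; |δ̄_i − δ̄_j| < π/2 for every edge {i,j} ∈ E(G); and for all i, 1/(X_{di} − X'_{di}) − B_{ii} + Σ_{j∈N_i} B_{ij}(V̄_i + V̄_j sin²(δ̄_i − δ̄_j))/(V̄_i cos(δ̄_i − δ̄_j)) > 0. Then the incremental storage function 𝒮₁ has a local minimum at (δ̄, f̄, V̄): there is a neighborhood U of (δ̄, f̄, V̄) in ℝ^{3n} such that 𝒮₁(δ, f, V) ≥ 𝒮₁(δ̄, f̄, V̄) = 0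 for all (δ, f, V) ∈ U. -/
open Finset

/-- The matrix `E(δ)`: `E i i = 1/(Xd i - Xd' i) - B i i`,
`E i j = B i j * cos (δ i - δ j)` for `i ≠ j` (which is `0` for non-adjacent pairs,
since there `B i j = 0`). -/
noncomputable def Emat (n : ℕ) (B : Fin n → Fin n → ℝ) (Xd Xd' : Fin n → ℝ)
    (δ : Fin n → ℝ) (i j : Fin n) : ℝ :=
  if i = j then 1 / (Xd i - Xd' i) - B i i else B i j * Real.cos (δ i - δ j)

/-- The incremental storage function `𝒮₁(δ, f, V)` (the Bregman distance of the storage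
function `S₁(δ,f,V) = ½ ∑ i (Tp i / Kp i) f i² + ½ Vᵀ E(δ) V` at the point `(δ̄, f̄, V̄)`).
The sum over the unordered edges `{i,j} ∈ E(G)` (each edge counted once) is written as half
the double sum over ordered adjacent pairs, the summand being symmetric in `i` and `j`
when `B` is symmetric. -/
noncomputable def storage1 (n : ℕ) (G : SimpleGraph (Fin n)) [DecidableRel G.Adj]
    (B : Fin n → Fin n → ℝ) (Xd Xd' Tp Kp : Fin n → ℝ)
    (δbar fbar Vbar δ f V : Fin n → ℝ) : ℝ :=
  (1 / 2) * ∑ i, (Tp i / Kp i) * (f i - fbar i) ^ 2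
    + (1 / 2) * ∑ i, ∑ j, V i * Emat n B Xd Xd' δ i j * V j
    - (1 / 2) * ∑ i, ∑ j, Vbar i * Emat n B Xd Xd' δbar i j * Vbar j
    - ∑ i, (∑ j, Emat n B Xd Xd' δbar i j * Vbar j) * (V i - Vbar i)
    + (1 / 2) * ∑ i, ∑ j ∈ G.neighborFinset i,
        B i j * Vbar i * Vbar j * Real.sin (δbar i - δbar j) *
          ((δ i - δ j) - (δbar i - δbar j))


lemma trig_cos (t : ℝ) (ht : |t| ≤ 1) : |Real.cos t - (1 - t^2/2)| ≤ |t|^3 := by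
  have h := Real.cos_bound ht
  have h2 : |t|^4 * (5/96) ≤ |t|^3 := by
    have h3 : |t|^4 = |t|^3 * |t| := by ring
    nlinarith [abs_nonneg t, pow_nonneg (abs_nonneg t) 3]
  calc |Real.cos t - (1 - t^2/2)| ≤ |t|^4 * (5/96) := by
        simpa using h
    _ ≤ |t|^3 := h2

lemma trig_sin (t : ℝ) (ht : |t| ≤ 1) : |Real.sin t - t| ≤ |t|^3 := by
  have h := Real.sin_bound ht
  have : |Real.sin t - t| ≤ |Real.sin t - (t - t^3/6)| + |t^3/6| := by
    have : Real.sin t - t = (Real.sin t - (t - t^3/6)) + (-(t^3/6)) := by ring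
    rw [this]
    exact (abs_add_le _ _).trans (by rw [abs_neg])
  have h4 : |t^3/6| = |t|^3/6 := by
    rw [abs_div, abs_pow]; norm_num
  have h2 : |t|^4 * (5/96) ≤ |t|^3 * (5/96) := by
    have h3 : |t|^4 = |t|^3 * |t| := by ring
    nlinarith [abs_nonneg t, pow_nonneg (abs_nonneg t) 3]
  calc |Real.sin t - t| ≤ |Real.sin t - (t - t^3/6)| + |t^3/6| := this
    _ ≤ |t|^4 * (5/96) + |t|^3/6 := by
      rw [h4]; gcongr
      exact h.trans (by nlinarith [pow_nonneg (abs_nonneg t) 4, mul_le_mul_of_nonneg_left ht (pow_nonneg (abs_nonneg t) 4)])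
    _ ≤ |t|^3 := by nlinarith [pow_nonneg (abs_nonneg t) 3, h2]

lemma trig_lip (a b : ℝ) : |Real.cos a - Real.cos b| ≤ |a - b| := by
  rw [Real.cos_sub_cos]
  rw [abs_mul, abs_mul, abs_neg]
  have h1 : |Real.sin ((a+b)/2)| ≤ 1 := Real.abs_sin_le_one _
  have h2 : |Real.sin ((a-b)/2)| ≤ |(a-b)/2| := Real.abs_sin_le_abs
  calc |(2 : ℝ)| * |Real.sin ((a+b)/2)| * |Real.sin ((a-b)/2)|
      ≤ 2 * 1 * |(a-b)/2| := by
        apply mul_le_mul _ h2 (abs_nonneg _) (by positivity)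
        apply mul_le_mul _ h1 (abs_nonneg _) (by norm_num)
        norm_num
    _ = |a - b| := by rw [abs_div, abs_two]; ring

set_option maxHeartbeats 1000000 in
lemma pair_est (θ t u v x y η ρ : ℝ)
    (hx : 0 < x) (hy : 0 < y) (hc : 0 < Real.cos θ)
    (hη0 : 0 < η) (hη1 : η < 1) (hρ : 0 < ρ)
    (hρK : ρ * (4*x*y + 3*x + 3*y + 1) ≤ η * (x*y*Real.cos θ) / 2)
    (ht : |t| ≤ 2*ρ) (ht1 : |t| ≤ 1) (hu : |u| ≤ ρ) (hv : |v| ≤ ρ) :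
    Real.cos (θ + t) * ((x+u)*(y+v)) - Real.cos θ * (x*y)
      - Real.cos θ * (y*u + x*v) + x*y*Real.sin θ * t
    ≤ (1/(1-η)) * ((x + Real.sin θ^2 * y)/(2*x*Real.cos θ)) * u^2
      + (1/(1-η)) * ((y + Real.sin θ^2 * x)/(2*y*Real.cos θ)) * v^2
      + ρ * (u^2 + v^2) := by
  set c := Real.cos θ with hcdef
  set s := Real.sin θ with hsdef
  have hsc : s^2 + c^2 = 1 := Real.sin_sq_add_cos_sq θ
  have hc1 : c ≤ 1 := Real.cos_le_one θ
  have hs1 : |s| ≤ 1 := Real.abs_sin_le_one θ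
  have hA : (0:ℝ) < 1 - η := by linarith
  have hcos := trig_cos t ht1
  have hsin := trig_sin t ht1
  have hsin' : |t - Real.sin t| ≤ |t|^3 := by rwa [abs_sub_comm] at hsin
  have habs3 : (0:ℝ) ≤ |t|^3 := by positivity
  have ht3 : |t|^3 ≤ 2*ρ*t^2 := by
    have h : |t|^3 = |t| * t^2 := by rw [← sq_abs]; ring
    rw [h]; exact mul_le_mul_of_nonneg_right ht (sq_nonneg t)
  have ht2 : |t|^3 ≤ t^2 := by
    have h : |t|^3 = |t| * t^2 := by rw [← sq_abs]; ring
    rw [h]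
    calc |t| * t^2 ≤ 1 * t^2 := mul_le_mul_of_nonneg_right ht1 (sq_nonneg t)
      _ = t^2 := one_mul _
  -- decompose LHS
  have key : Real.cos (θ + t) * ((x+u)*(y+v)) - c * (x*y) - c * (y*u + x*v) + x*y*s*t
      = x*y*(c*Real.cos t - s*Real.sin t - c + s*t)
        + (y*u + x*v)*(c*Real.cos t - s*Real.sin t - c)
        + u*v*(c*Real.cos t - s*Real.sin t) := by
    rw [Real.cos_add]; ring
  -- T1
  have T1 : x*y*(c*Real.cos t - s*Real.sin t - c + s*t) ≤ x*y*(-(c*t^2)/2) + 4*x*y*ρ*t^2 := by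
    have h1 : c*Real.cos t - c ≤ c*(-(t^2)/2 + |t|^3) := by
      have h0 : Real.cos t ≤ 1 - t^2/2 + |t|^3 := by
        have := (abs_le.mp hcos).2; linarith
      have := mul_le_mul_of_nonneg_left h0 hc.le
      linarith [this]
    have h2 : s*t - s*Real.sin t ≤ |t|^3 := by
      calc s*t - s*Real.sin t = s * (t - Real.sin t) := by ring
        _ ≤ |s * (t - Real.sin t)| := le_abs_self _
        _ = |s| * |t - Real.sin t| := abs_mul _ _
        _ ≤ 1 * (|t|^3) := mul_le_mul hs1 hsin' (abs_nonneg _) zero_le_one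
        _ = |t|^3 := one_mul _
    have h3 : c*Real.cos t - s*Real.sin t - c + s*t ≤ -(c*t^2)/2 + 2*|t|^3 := by
      have hcle : c*|t|^3 ≤ 1*|t|^3 := mul_le_mul_of_nonneg_right hc1 habs3
      have h1' := mul_le_mul_of_nonneg_left (le_refl (-(t^2)/2 + |t|^3)) hc.le
      linarith [h1, h2, hcle]
    have h4 := mul_le_mul_of_nonneg_left h3 (mul_pos hx hy).le
    have h5 := mul_le_mul_of_nonneg_left ht3 (by positivity : (0:ℝ) ≤ 2*(x*y))
    linarith [h4, h5]
  -- T2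
  have T2 : (y*u + x*v)*(c*Real.cos t - s*Real.sin t - c)
      ≤ -(s*t*(y*u+x*v)) + 3*ρ*(x+y)*t^2 := by
    have e1 : |c*(Real.cos t - 1)| ≤ t^2/2 + |t|^3 := by
      rw [abs_mul]
      have h0 : |Real.cos t - 1| ≤ t^2/2 + |t|^3 := by
        have h := abs_le.mp hcos
        rw [abs_le]
        constructor
        · linarith [h.1, sq_nonneg t]
        · linarith [h.2, sq_nonneg t]
      have hcc : |c| ≤ 1 := by rw [abs_of_pos hc]; exact hc1
      calc |c| * |Real.cos t - 1| ≤ 1 * (t^2/2 + |t|^3) :=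
            mul_le_mul hcc h0 (abs_nonneg _) zero_le_one
        _ = t^2/2 + |t|^3 := one_mul _
    have e2 : |s*(t - Real.sin t)| ≤ |t|^3 := by
      rw [abs_mul]
      calc |s| * |t - Real.sin t| ≤ 1 * (|t|^3) :=
            mul_le_mul hs1 hsin' (abs_nonneg _) zero_le_one
        _ = |t|^3 := one_mul _
    have e3 : |c*(Real.cos t - 1) + s*(t - Real.sin t)| ≤ 3*t^2 := by
      calc |c*(Real.cos t - 1) + s*(t - Real.sin t)|
          ≤ |c*(Real.cos t - 1)| + |s*(t - Real.sin t)| := abs_add_le _ _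
        _ ≤ (t^2/2 + |t|^3) + |t|^3 := add_le_add e1 e2
        _ ≤ 3*t^2 := by linarith [ht2, sq_nonneg t]
    have hyuxv : |y*u+x*v| ≤ ρ*(x+y) := by
      calc |y*u+x*v| ≤ |y*u| + |x*v| := abs_add_le _ _
        _ = y*|u| + x*|v| := by rw [abs_mul, abs_mul, abs_of_pos hy, abs_of_pos hx]
        _ ≤ y*ρ + x*ρ := by gcongr
        _ = ρ*(x+y) := by ring
    have habs : (y*u+x*v)*(c*(Real.cos t - 1) + s*(t - Real.sin t)) ≤ 3*ρ*(x+y)*t^2 := by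
      calc (y*u+x*v)*(c*(Real.cos t - 1) + s*(t - Real.sin t))
          ≤ |(y*u+x*v)*(c*(Real.cos t - 1) + s*(t - Real.sin t))| := le_abs_self _
        _ = |y*u+x*v| * |c*(Real.cos t - 1) + s*(t - Real.sin t)| := abs_mul _ _
        _ ≤ (ρ*(x+y)) * (3*t^2) :=
            mul_le_mul hyuxv e3 (abs_nonneg _) (by positivity)
        _ = 3*ρ*(x+y)*t^2 := by ring
    linarith [habs]
  -- T3
  have T3 : u*v*(c*Real.cos t - s*Real.sin t) ≤ c*(u*v) + ρ*(u^2+v^2) := by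
    have hca : c*Real.cos t - s*Real.sin t = Real.cos (θ + t) := (Real.cos_add θ t).symm
    rw [hca]
    have hlip : |Real.cos (θ+t) - c| ≤ |t| := by
      have := trig_lip (θ+t) θ
      simpa using this
    have huv : |u| * |v| * |t| ≤ ρ*(u^2+v^2) := by
      have h1 : |u| * |v| * |t| ≤ |u| * |v| * (2*ρ) :=
        mul_le_mul_of_nonneg_left ht (by positivity)
      have h2 : |u| * |v| * (2*ρ) ≤ ((u^2+v^2)/2) * (2*ρ) := by
        apply mul_le_mul_of_nonneg_right _ (by positivity)
        linarith [sq_nonneg (|u| - |v|), sq_abs u, sq_abs v]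
      calc |u| * |v| * |t| ≤ ((u^2+v^2)/2) * (2*ρ) := h1.trans h2
        _ = ρ*(u^2+v^2) := by ring
    have h3 : u*v*(Real.cos (θ+t) - c) ≤ ρ*(u^2+v^2) := by
      calc u*v*(Real.cos (θ+t) - c) ≤ |u*v*(Real.cos (θ+t) - c)| := le_abs_self _
        _ = |u| * |v| * |Real.cos (θ+t) - c| := by rw [abs_mul, abs_mul]
        _ ≤ |u| * |v| * |t| :=
            mul_le_mul_of_nonneg_left hlip (by positivity)
        _ ≤ ρ*(u^2+v^2) := huv
    linarith [h3]
  -- quadratic completion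
  have hq : -(x*y*(c*t^2)/2) - s*t*(y*u+x*v)
      ≤ -(η*(x*y*c)*t^2/2) + s^2*(y*u+x*v)^2/(2*(1-η)*(x*y*c)) := by
    set a : ℝ := (1-η)*(x*y*c) with hadef
    set b : ℝ := s*(y*u+x*v) with hbdef
    have ha : 0 < a := by positivity
    have hnn' : 0 ≤ b^2/(2*a) + a*t^2/2 + b*t := by
      have hkey : b^2/(2*a) + a*t^2/2 + b*t = (a*t+b)^2/(2*a) := by
        field_simp; ring
      rw [hkey]; positivity
    have he : s^2*(y*u+x*v)^2 = b^2 := by rw [hbdef]; ring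
    rw [he]
    have h9 : b^2/(2*(1-η)*(x*y*c)) = b^2/(2*a) := by rw [hadef]; ring
    rw [h9]
    have h6 : -(x*y*(c*t^2)/2) = -(η*(x*y*c)*t^2/2) + (-(a*t^2/2)) := by
      rw [hadef]; ring
    have h7 : s*t*(y*u+x*v) = b*t := by rw [hbdef]; ring
    rw [h6, h7]
    linarith
  -- absorb t^2 errors
  have hterr : -(η*(x*y*c)*t^2/2) + 4*x*y*ρ*t^2 + 3*ρ*(x+y)*t^2 ≤ 0 := by
    have h8 : ρ*(4*x*y + 3*x + 3*y)*t^2 ≤ (η*(x*y*c)/2)*t^2 := by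
      apply mul_le_mul_of_nonneg_right _ (sq_nonneg t)
      linarith
    linarith [h8]
  -- final quadratic-form bound
  have hfin : s^2*(y*u+x*v)^2/(2*(1-η)*(x*y*c)) + c*(u*v)
      ≤ (1/(1-η)) * ((x + s^2 * y)/(2*x*c)) * u^2
        + (1/(1-η)) * ((y + s^2 * x)/(2*y*c)) * v^2 := by
    have hs2 : s^2 = 1 - c^2 := by linarith
    rw [hs2, ← sub_nonneg]
    have hkey : (1/(1-η)) * ((x + (1-c^2) * y)/(2*x*c)) * u^2
        + (1/(1-η)) * ((y + (1-c^2) * x)/(2*y*c)) * v^2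
        - ((1-c^2)*(y*u+x*v)^2/(2*(1-η)*(x*y*c)) + c*(u*v))
        = (x*y*((1 - η*c^2)*(u-v)^2 + η*c^2*(u^2+v^2))) / (2*(1-η)*(x*y*c)) := by
      field_simp
      ring
    rw [hkey]
    apply div_nonneg _ (by positivity)
    have hec : η*c^2 ≤ 1 := by
      have hc2 : c^2 ≤ 1 := by rw [hcdef]; exact Real.cos_sq_le_one θ
      have := mul_le_mul_of_nonneg_right hη1.le (sq_nonneg c)
      linarith
    have hq1 : 0 ≤ (1 - η*c^2)*(u-v)^2 := mul_nonneg (by linarith) (sq_nonneg _)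
    have hq2 : 0 ≤ η*c^2*(u^2+v^2) := by positivity
    exact mul_nonneg (mul_pos hx hy).le (by linarith)
  rw [key]
  linarith only [add_le_add (add_le_add T1 T2) T3, hq, hterr, hfin]

noncomputable def psi (n : ℕ) (δbar Vbar δ V : Fin n → ℝ) (i j : Fin n) : ℝ :=
  Real.cos (δ i - δ j) * (V i * V j) - Real.cos (δbar i - δbar j) * (Vbar i * Vbar j)
  - Real.cos (δbar i - δbar j) * (Vbar j * (V i - Vbar i) + Vbar i * (V j - Vbar j))
  + Vbar i * Vbar j * Real.sin (δbar i - δbar j) * ((δ i - δ j) - (δbar i - δbar j))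

lemma row_sum {n : ℕ} (G : SimpleGraph (Fin n)) [DecidableRel G.Adj]
    (B : Fin n → Fin n → ℝ) (Xd Xd' : Fin n → ℝ)
    (hBzero : ∀ i j, i ≠ j → ¬ G.Adj i j → B i j = 0)
    (δ' W : Fin n → ℝ) (i : Fin n) :
    ∑ j, Emat n B Xd Xd' δ' i j * W j
      = (1 / (Xd i - Xd' i) - B i i) * W i
        + ∑ j ∈ G.neighborFinset i, B i j * Real.cos (δ' i - δ' j) * W j := by
  have h1 : ∀ j ∈ univ.erase i, Emat n B Xd Xd' δ' i j * W j
      = (if G.Adj i j then B i j * Real.cos (δ' i - δ' j) * W j else 0) := by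
    intro j hj
    have hij : i ≠ j := (Finset.ne_of_mem_erase hj).symm
    by_cases h : G.Adj i j
    · simp [Emat, hij, h]
    · simp [Emat, hij, h, hBzero i j hij h]
  calc ∑ j, Emat n B Xd Xd' δ' i j * W j
      = Emat n B Xd Xd' δ' i i * W i + ∑ j ∈ univ.erase i, Emat n B Xd Xd' δ' i j * W j :=
        (Finset.add_sum_erase _ _ (mem_univ i)).symm
    _ = (1 / (Xd i - Xd' i) - B i i) * W i
        + ∑ j ∈ univ.erase i, (if G.Adj i j then B i j * Real.cos (δ' i - δ' j) * W j else 0) := by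
        rw [sum_congr rfl h1]; simp [Emat]
    _ = (1 / (Xd i - Xd' i) - B i i) * W i
        + ∑ j, (if G.Adj i j then B i j * Real.cos (δ' i - δ' j) * W j else 0) := by
        congr 1
        apply Finset.sum_erase
        simp [G.irrefl]
    _ = (1 / (Xd i - Xd' i) - B i i) * W i
        + ∑ j ∈ G.neighborFinset i, B i j * Real.cos (δ' i - δ' j) * W j := by
        rw [SimpleGraph.neighborFinset_eq_filter, sum_filter]

lemma nbr_swap {n : ℕ} (G : SimpleGraph (Fin n)) [DecidableRel G.Adj]
    (F : Fin n → Fin n → ℝ) :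
    ∑ i, ∑ j ∈ G.neighborFinset i, F i j = ∑ i, ∑ j ∈ G.neighborFinset i, F j i := by
  have h : ∀ (F : Fin n → Fin n → ℝ),
      ∑ i, ∑ j ∈ G.neighborFinset i, F i j = ∑ i, ∑ j, if G.Adj i j then F i j else 0 := by
    intro F
    refine sum_congr rfl fun i _ => ?_
    rw [SimpleGraph.neighborFinset_eq_filter, sum_filter]
  rw [h, h]
  rw [Finset.sum_comm]
  refine sum_congr rfl fun i _ => sum_congr rfl fun j _ => ?_
  exact if_congr (G.adj_comm j i) rfl rfl

lemma ident {n : ℕ} (G : SimpleGraph (Fin n)) [DecidableRel G.Adj]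
    (B : Fin n → Fin n → ℝ) (Xd Xd' Tp Kp : Fin n → ℝ)
    (hBsym : ∀ i j, G.Adj i j → B i j = B j i)
    (hBzero : ∀ i j, i ≠ j → ¬ G.Adj i j → B i j = 0)
    (δbar fbar Vbar δ f V : Fin n → ℝ) :
    storage1 n G B Xd Xd' Tp Kp δbar fbar Vbar δ f V
      = (1/2) * ∑ i, (Tp i / Kp i) * (f i - fbar i)^2
        + (1/2) * ∑ i, (1 / (Xd i - Xd' i) - B i i) * (V i - Vbar i)^2
        + (1/2) * ∑ i, ∑ j ∈ G.neighborFinset i, B i j * psi n δbar Vbar δ V i j := by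
  have hquad : ∀ (δ' W : Fin n → ℝ), ∑ i, ∑ j, W i * Emat n B Xd Xd' δ' i j * W j
      = (∑ i, (1 / (Xd i - Xd' i) - B i i) * W i^2)
        + ∑ i, ∑ j ∈ G.neighborFinset i, B i j * Real.cos (δ' i - δ' j) * (W i * W j) := by
    intro δ' W
    rw [← Finset.sum_add_distrib]
    refine sum_congr rfl fun i _ => ?_
    have h0 : ∑ j, W i * Emat n B Xd Xd' δ' i j * W j
        = W i * ∑ j, Emat n B Xd Xd' δ' i j * W j := by
      rw [Finset.mul_sum]
      exact sum_congr rfl fun j _ => by ring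
    rw [h0, row_sum G B Xd Xd' hBzero δ' W i, mul_add, Finset.mul_sum]
    congr 1
    · ring
    · exact sum_congr rfl fun j _ => by ring
  have hgrad : ∑ i, (∑ j, Emat n B Xd Xd' δbar i j * Vbar j) * (V i - Vbar i)
      = (∑ i, (1 / (Xd i - Xd' i) - B i i) * Vbar i * (V i - Vbar i))
        + ∑ i, ∑ j ∈ G.neighborFinset i,
            B i j * Real.cos (δbar i - δbar j) * Vbar j * (V i - Vbar i) := by
    rw [← Finset.sum_add_distrib]
    refine sum_congr rfl fun i _ => ?_
    rw [row_sum G B Xd Xd' hBzero δbar Vbar i, add_mul, Finset.sum_mul]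
  have hswap : ∑ i, ∑ j ∈ G.neighborFinset i,
        B i j * Real.cos (δbar i - δbar j) * Vbar j * (V i - Vbar i)
      = ∑ i, ∑ j ∈ G.neighborFinset i,
        B i j * Real.cos (δbar i - δbar j) * Vbar i * (V j - Vbar j) := by
    rw [nbr_swap G (fun i j => B i j * Real.cos (δbar i - δbar j) * Vbar j * (V i - Vbar i))]
    refine sum_congr rfl fun i _ => sum_congr rfl fun j hj => ?_
    have hadj : G.Adj i j := by rwa [← SimpleGraph.mem_neighborFinset]
    have hb : B j i = B i j := (hBsym i j hadj).symm
    have hcos : Real.cos (δbar j - δbar i) = Real.cos (δbar i - δbar j) := by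
      rw [← Real.cos_neg, neg_sub]
    rw [hb, hcos]
  have hv : ∑ i, (1 / (Xd i - Xd' i) - B i i) * (V i - Vbar i)^2
      = (∑ i, (1 / (Xd i - Xd' i) - B i i) * V i^2)
        - (∑ i, (1 / (Xd i - Xd' i) - B i i) * Vbar i^2)
        - 2 * ∑ i, (1 / (Xd i - Xd' i) - B i i) * Vbar i * (V i - Vbar i) := by
    simp only [Finset.mul_sum, ← Finset.sum_sub_distrib]
    exact sum_congr rfl fun i _ => by ring
  have hpsi : ∑ i, ∑ j ∈ G.neighborFinset i, B i j * psi n δbar Vbar δ V i j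
      = (∑ i, ∑ j ∈ G.neighborFinset i, B i j * Real.cos (δ i - δ j) * (V i * V j))
        - (∑ i, ∑ j ∈ G.neighborFinset i,
            B i j * Real.cos (δbar i - δbar j) * (Vbar i * Vbar j))
        - (∑ i, ∑ j ∈ G.neighborFinset i,
            B i j * Real.cos (δbar i - δbar j) * Vbar j * (V i - Vbar i))
        - (∑ i, ∑ j ∈ G.neighborFinset i,
            B i j * Real.cos (δbar i - δbar j) * Vbar i * (V j - Vbar j))
        + ∑ i, ∑ j ∈ G.neighborFinset i,
            B i j * Vbar i * Vbar j * Real.sin (δbar i - δbar j) *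
              ((δ i - δ j) - (δbar i - δbar j)) := by
    simp only [← Finset.sum_sub_distrib, ← Finset.sum_add_distrib]
    refine sum_congr rfl fun i _ => sum_congr rfl fun j _ => ?_
    simp only [psi]; ring
  rw [storage1, hquad δ V, hquad δbar Vbar, hgrad, hv, hpsi, hswap]
  ring

set_option maxHeartbeats 1000000 in
lemma core (n : ℕ) (hn : 1 ≤ n) (G : SimpleGraph (Fin n)) [DecidableRel G.Adj]
    (Xd Xd' : Fin n → ℝ) (hX : ∀ i, Xd' i < Xd i)
    (B : Fin n → Fin n → ℝ)
    (hBsym : ∀ i j, G.Adj i j → B i j = B j i)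
    (hBneg : ∀ i j, G.Adj i j → B i j < 0)
    (hBzero : ∀ i j, i ≠ j → ¬ G.Adj i j → B i j = 0)
    (hBii : ∀ i, B i i = ∑ j ∈ G.neighborFinset i, B i j)
    (Tp Kp : Fin n → ℝ) (hTp : ∀ i, 0 < Tp i) (hKp : ∀ i, 0 < Kp i)
    (δbar fbar Vbar : Fin n → ℝ)
    (hV : ∀ i, 0 < Vbar i)
    (hangle : ∀ i j, G.Adj i j → |δbar i - δbar j| < Real.pi / 2)
    (hsec : ∀ i, 0 < 1 / (Xd i - Xd' i) - B i i +
      ∑ j ∈ G.neighborFinset i,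
        B i j * (Vbar i + Vbar j * Real.sin (δbar i - δbar j) ^ 2) /
          (Vbar i * Real.cos (δbar i - δbar j))) :
    ∃ ρ > (0:ℝ), ∀ δ f V : Fin n → ℝ,
      (∀ i, |δ i - δbar i| ≤ ρ) → (∀ i, |V i - Vbar i| ≤ ρ) →
      0 ≤ storage1 n G B Xd Xd' Tp Kp δbar fbar Vbar δ f V := by
  classical
  have hne : (univ : Finset (Fin n)).Nonempty := ⟨⟨0, hn⟩, mem_univ _⟩
  obtain ⟨D, hDdef⟩ : ∃ D : Fin n → ℝ, ∀ i, D i = 1 / (Xd i - Xd' i) - B i i :=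
    ⟨_, fun _ => rfl⟩
  obtain ⟨μ, hμdef⟩ : ∃ μ : Fin n → ℝ, ∀ i, μ i = D i + ∑ j ∈ G.neighborFinset i,
      B i j * (Vbar i + Vbar j * Real.sin (δbar i - δbar j) ^ 2) /
        (Vbar i * Real.cos (δbar i - δbar j)) := ⟨_, fun _ => rfl⟩
  have hμ : ∀ i, 0 < μ i := by
    intro i; rw [hμdef, hDdef]; exact hsec i
  have hcpos : ∀ i j, G.Adj i j → 0 < Real.cos (δbar i - δbar j) := by
    intro i j h
    have h2 := abs_lt.mp (hangle i j h)
    exact Real.cos_pos_of_mem_Ioo ⟨h2.1, h2.2⟩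
  have hadj_of_mem : ∀ i j, j ∈ G.neighborFinset i → G.Adj i j := by
    intro i j hj; rwa [SimpleGraph.mem_neighborFinset] at hj
  have hDμ : ∀ i, μ i ≤ D i := by
    intro i
    have hsum : ∑ j ∈ G.neighborFinset i,
        B i j * (Vbar i + Vbar j * Real.sin (δbar i - δbar j) ^ 2) /
          (Vbar i * Real.cos (δbar i - δbar j)) ≤ 0 := by
      apply Finset.sum_nonpos
      intro j hj
      have hadj := hadj_of_mem i j hj
      have hb := hBneg i j hadj
      have hden : 0 < Vbar i * Real.cos (δbar i - δbar j) :=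
        mul_pos (hV i) (hcpos i j hadj)
      apply div_nonpos_of_nonpos_of_nonneg _ hden.le
      have hnum : 0 ≤ Vbar i + Vbar j * Real.sin (δbar i - δbar j)^2 := by
        nlinarith [hV i, hV j, sq_nonneg (Real.sin (δbar i - δbar j))]
      have hmn := mul_nonneg (by linarith : (0:ℝ) ≤ -B i j) hnum
      nlinarith [hmn]
    rw [hμdef]
    linarith
  have hD : ∀ i, 0 < D i := fun i => lt_of_lt_of_le (hμ i) (hDμ i)
  obtain ⟨η, hηdef⟩ : ∃ η : ℝ, η = univ.inf' hne (fun i => μ i / (4 * D i)) := ⟨_, rfl⟩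
  have hη0 : 0 < η := by
    rw [hηdef, Finset.lt_inf'_iff]
    intro i _
    exact div_pos (hμ i) (by linarith [hD i])
  have hηle : ∀ i, η ≤ μ i / (4 * D i) := by
    intro i; rw [hηdef]; exact Finset.inf'_le _ (mem_univ i)
  have hη14 : η ≤ 1/4 := by
    obtain ⟨i, _⟩ := hne
    calc η ≤ μ i / (4 * D i) := hηle i
      _ ≤ 1/4 := by
          rw [div_le_div_iff₀ (by linarith [hD i]) (by norm_num)]
          linarith [hDμ i, hD i]
  have hη1 : η < 1 := by linarith
  have hA : (0:ℝ) < 1 - η := by linarith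
  have hηnode : ∀ i, (1/(1-η)) * (D i - μ i) ≤ D i - μ i / 2 := by
    intro i
    have h1 : 1/(1-η) ≤ 1 + 2*η := by
      rw [div_le_iff₀ hA]
      nlinarith
    have h2 : 0 ≤ D i - μ i := by linarith [hDμ i]
    have h3 : (1/(1-η)) * (D i - μ i) ≤ (1 + 2*η) * (D i - μ i) :=
      mul_le_mul_of_nonneg_right h1 h2
    have h4 : 2*η*(D i) ≤ μ i / 2 := by
      have h5 := hηle i
      rw [le_div_iff₀ (by linarith [hD i] : (0:ℝ) < 4 * D i)] at h5
      nlinarith [h5]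
    have h5 : 2*η*(D i - μ i) ≤ 2*η*(D i) :=
      mul_le_mul_of_nonneg_left (by linarith [hμ i]) (by linarith)
    nlinarith [h3, h4, h5, mul_pos hη0 (hμ i)]
  have hBiinp : ∀ i, B i i ≤ 0 := by
    intro i; rw [hBii i]
    apply Finset.sum_nonpos
    intro j hj
    exact (hBneg i j (hadj_of_mem i j hj)).le
  -- rho construction
  obtain ⟨K, hKdef⟩ : ∃ K : Fin n → Fin n → ℝ, ∀ i j,
      K i j = 4*Vbar i*Vbar j + 3*Vbar i + 3*Vbar j + 1 := ⟨_, fun _ _ => rfl⟩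
  have hK : ∀ i j, 0 < K i j := by
    intro i j
    have h1 := hV i; have h2 := hV j
    rw [hKdef]
    nlinarith
  obtain ⟨pb, hpbdef⟩ : ∃ pb : Fin n → Fin n → ℝ, ∀ i j, pb i j = if G.Adj i j then
      η * (Vbar i * Vbar j * Real.cos (δbar i - δbar j)) / (2 * K i j) else 1 :=
    ⟨_, fun _ _ => rfl⟩
  obtain ⟨nb, hnbdef⟩ : ∃ nb : Fin n → ℝ, ∀ i, nb i = μ i / (4 * (1 - B i i)) :=
    ⟨_, fun _ => rfl⟩
  obtain ⟨S, hSdef⟩ : ∃ S : Finset ℝ, S = insert (1/2)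
      ((univ.image nb) ∪ ((univ ×ˢ univ).image fun p => pb p.1 p.2)) := ⟨_, rfl⟩
  have hShalf : (1/2 : ℝ) ∈ S := by simp [hSdef]
  have hSnb : ∀ i, nb i ∈ S := by
    intro i; rw [hSdef]
    exact mem_insert_of_mem (mem_union_left _ (mem_image_of_mem nb (mem_univ i)))
  have hSpb : ∀ i j, pb i j ∈ S := by
    intro i j; rw [hSdef]
    apply mem_insert_of_mem
    apply mem_union_right
    have hp : (i, j) ∈ univ ×ˢ (univ : Finset (Fin n)) :=
      mem_product.mpr ⟨mem_univ i, mem_univ j⟩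
    exact mem_image_of_mem (fun p => pb p.1 p.2) hp
  have hSne : S.Nonempty := ⟨1/2, hShalf⟩
  obtain ⟨ρ, hρdef⟩ : ∃ ρ : ℝ, ρ = S.inf' hSne id := ⟨_, rfl⟩
  have hρpos : 0 < ρ := by
    rw [hρdef, Finset.lt_inf'_iff]
    intro b hb
    rw [hSdef] at hb
    simp only [mem_insert, mem_union, mem_image, mem_product] at hb
    rcases hb with rfl | ⟨i, _, rfl⟩ | ⟨p, _, rfl⟩
    · norm_num
    · simp only [id_eq, hnbdef]
      exact div_pos (hμ i) (by linarith [hBiinp i])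
    · by_cases hadj : G.Adj p.1 p.2
      · simp only [id_eq, hpbdef, if_pos hadj]
        apply div_pos
        · exact mul_pos hη0 (mul_pos (mul_pos (hV p.1) (hV p.2)) (hcpos p.1 p.2 hadj))
        · linarith [hK p.1 p.2]
      · simp [hpbdef, hadj]
  have hρle : ∀ x ∈ S, ρ ≤ x := by
    intro x hx; rw [hρdef]; exact Finset.inf'_le id hx
  have hρhalf : ρ ≤ 1/2 := hρle _ hShalf
  have hρnb : ∀ i, 2 * ρ * (-B i i) ≤ μ i / 2 := by
    intro i
    have h1 : ρ ≤ nb i := hρle _ (hSnb i)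
    rw [hnbdef] at h1
    have h2 : (0:ℝ) < 1 - B i i := by linarith [hBiinp i]
    have h3 : 2 * ρ * (-B i i) ≤ 2 * (μ i / (4 * (1 - B i i))) * (-B i i) := by
      apply mul_le_mul_of_nonneg_right _ (by linarith [hBiinp i])
      linarith
    have e : 2 * (μ i / (4 * (1 - B i i))) * (-B i i) = (μ i * (-B i i)) / (2*(1 - B i i)) := by
      field_simp
      ring
    have h4 : (μ i * (-B i i)) / (2*(1 - B i i)) ≤ μ i / 2 := by
      rw [div_le_div_iff₀ (by linarith) (by norm_num)]
      nlinarith [hμ i, hBiinp i]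
    linarith [e ▸ h3]
  have hρpb : ∀ i j, G.Adj i j →
      ρ * K i j ≤ η * (Vbar i * Vbar j * Real.cos (δbar i - δbar j)) / 2 := by
    intro i j hadj
    have h1 : ρ ≤ pb i j := hρle _ (hSpb i j)
    rw [hpbdef, if_pos hadj] at h1
    have hKp := hK i j
    calc ρ * K i j
        ≤ (η * (Vbar i * Vbar j * Real.cos (δbar i - δbar j)) / (2 * K i j)) * K i j :=
          mul_le_mul_of_nonneg_right h1 hKp.le
      _ = η * (Vbar i * Vbar j * Real.cos (δbar i - δbar j)) / 2 := by
          field_simp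
  -- main part
  refine ⟨ρ, hρpos, ?_⟩
  intro δ f V hδ hV'
  rw [ident G B Xd Xd' Tp Kp hBsym hBzero δbar fbar Vbar δ f V]
  have hf : 0 ≤ ∑ i, (Tp i / Kp i) * (f i - fbar i)^2 :=
    Finset.sum_nonneg fun i _ => mul_nonneg (div_nonneg (hTp i).le (hKp i).le) (sq_nonneg _)
  obtain ⟨w, hwdef⟩ : ∃ w : Fin n → Fin n → ℝ, ∀ i j, w i j =
      (Vbar i + Real.sin (δbar i - δbar j)^2 * Vbar j)/(2*Vbar i*Real.cos (δbar i - δbar j)) :=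
    ⟨_, fun _ _ => rfl⟩
  obtain ⟨w', hw'def⟩ : ∃ w' : Fin n → Fin n → ℝ, ∀ i j, w' i j =
      (Vbar j + Real.sin (δbar i - δbar j)^2 * Vbar i)/(2*Vbar j*Real.cos (δbar i - δbar j)) :=
    ⟨_, fun _ _ => rfl⟩
  have hpair : ∀ i, ∀ j ∈ G.neighborFinset i,
      (-B i j) * psi n δbar Vbar δ V i j
        ≤ (-B i j) * ((1/(1-η)) * w i j * (V i - Vbar i)^2
            + (1/(1-η)) * w' i j * (V j - Vbar j)^2
            + ρ * ((V i - Vbar i)^2 + (V j - Vbar j)^2)) := by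
    intro i j hj
    have hadj := hadj_of_mem i j hj
    have hb : (0:ℝ) ≤ -B i j := by linarith [hBneg i j hadj]
    apply mul_le_mul_of_nonneg_left _ hb
    have ht2ρ : |(δ i - δ j) - (δbar i - δbar j)| ≤ 2*ρ := by
      have h1 := hδ i; have h2 := hδ j
      have e : (δ i - δ j) - (δbar i - δbar j) = (δ i - δbar i) + -(δ j - δbar j) := by ring
      rw [e]
      calc |(δ i - δbar i) + -(δ j - δbar j)|
          ≤ |δ i - δbar i| + |-(δ j - δbar j)| := abs_add_le _ _
        _ = |δ i - δbar i| + |δ j - δbar j| := by rw [abs_neg]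
        _ ≤ ρ + ρ := add_le_add h1 h2
        _ = 2*ρ := by ring
    have ht1 : |(δ i - δ j) - (δbar i - δbar j)| ≤ 1 := by
      calc |(δ i - δ j) - (δbar i - δbar j)| ≤ 2*ρ := ht2ρ
        _ ≤ 1 := by linarith
    have hρK' : ρ * (4*Vbar i*Vbar j + 3*Vbar i + 3*Vbar j + 1)
        ≤ η * (Vbar i * Vbar j * Real.cos (δbar i - δbar j)) / 2 := by
      have h1 := hρpb i j hadj
      rwa [hKdef] at h1
    have hest := pair_est (δbar i - δbar j) ((δ i - δ j) - (δbar i - δbar j))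
      (V i - Vbar i) (V j - Vbar j) (Vbar i) (Vbar j) η ρ (hV i) (hV j)
      (hcpos i j hadj) hη0 hη1 hρpos hρK' ht2ρ ht1 (hV' i) (hV' j)
    have harg : δbar i - δbar j + ((δ i - δ j) - (δbar i - δbar j)) = δ i - δ j := by ring
    rw [harg] at hest
    rw [hwdef, hw'def]
    simp only [psi]
    linarith [hest]
  have hsum1 : ∑ i, ∑ j ∈ G.neighborFinset i, (-B i j) * psi n δbar Vbar δ V i j
      ≤ ∑ i, ∑ j ∈ G.neighborFinset i,
          (-B i j) * ((1/(1-η)) * w i j * (V i - Vbar i)^2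
            + (1/(1-η)) * w' i j * (V j - Vbar j)^2
            + ρ * ((V i - Vbar i)^2 + (V j - Vbar j)^2)) :=
    Finset.sum_le_sum fun i _ => Finset.sum_le_sum (hpair i)
  have hsplit : ∑ i, ∑ j ∈ G.neighborFinset i,
        (-B i j) * ((1/(1-η)) * w i j * (V i - Vbar i)^2
          + (1/(1-η)) * w' i j * (V j - Vbar j)^2
          + ρ * ((V i - Vbar i)^2 + (V j - Vbar j)^2))
      = (∑ i, ∑ j ∈ G.neighborFinset i,
          ((-B i j) * ((1/(1-η)) * w i j * (V i - Vbar i)^2 + ρ * (V i - Vbar i)^2)))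
        + ∑ i, ∑ j ∈ G.neighborFinset i,
          ((-B i j) * ((1/(1-η)) * w' i j * (V j - Vbar j)^2 + ρ * (V j - Vbar j)^2)) := by
    simp only [← Finset.sum_add_distrib]
    exact sum_congr rfl fun i _ => sum_congr rfl fun j _ => by ring
  have hswap2 : ∑ i, ∑ j ∈ G.neighborFinset i,
        ((-B i j) * ((1/(1-η)) * w' i j * (V j - Vbar j)^2 + ρ * (V j - Vbar j)^2))
      = ∑ i, ∑ j ∈ G.neighborFinset i,
        ((-B i j) * ((1/(1-η)) * w i j * (V i - Vbar i)^2 + ρ * (V i - Vbar i)^2)) := by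
    rw [nbr_swap]
    refine sum_congr rfl fun i _ => sum_congr rfl fun j hj => ?_
    have hadj := hadj_of_mem i j hj
    have hb : B j i = B i j := (hBsym i j hadj).symm
    have hww : w' j i = w i j := by
      rw [hw'def, hwdef]
      rw [show δbar j - δbar i = -(δbar i - δbar j) by ring, Real.sin_neg, Real.cos_neg, neg_sq]
    rw [hb, hww]
  have hnode : ∑ i, ∑ j ∈ G.neighborFinset i,
        ((-B i j) * ((1/(1-η)) * w i j * (V i - Vbar i)^2 + ρ * (V i - Vbar i)^2))
      ≤ ∑ i, (D i / 2) * (V i - Vbar i)^2 := by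
    apply Finset.sum_le_sum
    intro i _
    have e1 : ∑ j ∈ G.neighborFinset i,
        ((-B i j) * ((1/(1-η)) * w i j * (V i - Vbar i)^2 + ρ * (V i - Vbar i)^2))
        = ((1/(1-η)) * (∑ j ∈ G.neighborFinset i, (-B i j) * w i j)
            + ρ * (∑ j ∈ G.neighborFinset i, (-B i j))) * (V i - Vbar i)^2 := by
      rw [add_mul, mul_assoc, mul_assoc, Finset.sum_mul, Finset.sum_mul,
        Finset.mul_sum, Finset.mul_sum, ← Finset.sum_add_distrib]
      exact sum_congr rfl fun j _ => by ring
    have h2 : 2*(∑ j ∈ G.neighborFinset i, (-B i j) * w i j) = D i - μ i := by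
      have e2 : ∑ j ∈ G.neighborFinset i, 2*((-B i j) * w i j)
          = ∑ j ∈ G.neighborFinset i,
            -(B i j * (Vbar i + Vbar j * Real.sin (δbar i - δbar j)^2) /
              (Vbar i * Real.cos (δbar i - δbar j))) := by
        apply sum_congr rfl
        intro j hj
        have hadj := hadj_of_mem i j hj
        have hden1 : Vbar i ≠ 0 := (hV i).ne'
        have hden2 : Real.cos (δbar i - δbar j) ≠ 0 := (hcpos i j hadj).ne'
        rw [hwdef]
        field_simp
      rw [Finset.mul_sum, e2, Finset.sum_neg_distrib]
      rw [hμdef]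
      ring
    have h3 : ∑ j ∈ G.neighborFinset i, (-B i j) = -B i i := by
      rw [hBii i, Finset.sum_neg_distrib]
    rw [e1, h3]
    apply mul_le_mul_of_nonneg_right _ (sq_nonneg _)
    have h4 := hηnode i
    have h5 := hρnb i
    have h7 := congrArg (fun z => (1/(1-η)) * z) h2
    nlinarith [h4, h5, h7]
  have hkey : ∑ i, ∑ j ∈ G.neighborFinset i, (-B i j) * psi n δbar Vbar δ V i j
      ≤ ∑ i, (1 / (Xd i - Xd' i) - B i i) * (V i - Vbar i)^2 := by
    have hDeq : ∑ i, (1 / (Xd i - Xd' i) - B i i) * (V i - Vbar i)^2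
        = ∑ i, D i * (V i - Vbar i)^2 :=
      sum_congr rfl fun i _ => by rw [hDdef]
    rw [hDeq]
    have hfin : ∑ i, D i * (V i - Vbar i)^2 = 2 * ∑ i, (D i / 2) * (V i - Vbar i)^2 := by
      rw [Finset.mul_sum]
      exact sum_congr rfl fun i _ => by ring
    rw [hfin]
    calc ∑ i, ∑ j ∈ G.neighborFinset i, (-B i j) * psi n δbar Vbar δ V i j
        ≤ _ := hsum1
      _ = _ := hsplit
      _ = 2 * ∑ i, ∑ j ∈ G.neighborFinset i,
            ((-B i j) * ((1/(1-η)) * w i j * (V i - Vbar i)^2 + ρ * (V i - Vbar i)^2)) := by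
          rw [hswap2]; ring
      _ ≤ 2 * ∑ i, (D i / 2) * (V i - Vbar i)^2 := by linarith [hnode]
  have hBpsi : ∑ i, ∑ j ∈ G.neighborFinset i, B i j * psi n δbar Vbar δ V i j
      = -∑ i, ∑ j ∈ G.neighborFinset i, (-B i j) * psi n δbar Vbar δ V i j := by
    simp [Finset.sum_neg_distrib]
  linarith [hf, hkey, hBpsi]

/-- Local minimum of the incremental storage function: under the standing
assumptions on the network parameters and the security conditions on the steady state
`(δ̄, f̄, V̄)` (positive voltages, angle differences in `(-π/2, π/2)` across the edges, and
the strict inequality of Assumption 3), the incremental storage function `𝒮₁` vanishes at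
`(δ̄, f̄, V̄)` and has a local minimum there. -/
theorem stmt5 (n : ℕ) (hn : 1 ≤ n) (G : SimpleGraph (Fin n)) [DecidableRel G.Adj]
    (Xd Xd' : Fin n → ℝ) (hX : ∀ i, Xd' i < Xd i)
    (B : Fin n → Fin n → ℝ)
    (hBsym : ∀ i j, G.Adj i j → B i j = B j i)
    (hBneg : ∀ i j, G.Adj i j → B i j < 0)
    (hBzero : ∀ i j, i ≠ j → ¬ G.Adj i j → B i j = 0)
    (hBii : ∀ i, B i i = ∑ j ∈ G.neighborFinset i, B i j)
    (Tp Kp : Fin n → ℝ) (hTp : ∀ i, 0 < Tp i) (hKp : ∀ i, 0 < Kp i)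
    (δbar fbar Vbar : Fin n → ℝ)
    (hV : ∀ i, 0 < Vbar i)
    (hangle : ∀ i j, G.Adj i j → |δbar i - δbar j| < Real.pi / 2)
    (hsec : ∀ i, 0 < 1 / (Xd i - Xd' i) - B i i +
      ∑ j ∈ G.neighborFinset i,
        B i j * (Vbar i + Vbar j * Real.sin (δbar i - δbar j) ^ 2) /
          (Vbar i * Real.cos (δbar i - δbar j))) :
    storage1 n G B Xd Xd' Tp Kp δbar fbar Vbar δbar fbar Vbar = 0 ∧
    IsLocalMin (fun p : (Fin n → ℝ) × (Fin n → ℝ) × (Fin n → ℝ) =>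
        storage1 n G B Xd Xd' Tp Kp δbar fbar Vbar p.1 p.2.1 p.2.2)
      (δbar, fbar, Vbar) := by
  classical
  obtain ⟨ρ, hρpos, hcore⟩ := core n hn G Xd Xd' hX B hBsym hBneg hBzero hBii Tp Kp hTp hKp
    δbar fbar Vbar hV hangle hsec
  have part1 : storage1 n G B Xd Xd' Tp Kp δbar fbar Vbar δbar fbar Vbar = 0 := by
    rw [ident G B Xd Xd' Tp Kp hBsym hBzero δbar fbar Vbar δbar fbar Vbar]
    simp [psi]
  refine ⟨part1, ?_⟩
  have hev : ∀ᶠ q in nhds (δbar, fbar, Vbar),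
      0 ≤ storage1 n G B Xd Xd' Tp Kp δbar fbar Vbar q.1 q.2.1 q.2.2 := by
    refine Metric.eventually_nhds_iff.mpr ⟨ρ, hρpos, ?_⟩
    intro q hq
    rw [Prod.dist_eq] at hq
    have hq1 : dist q.1 δbar < ρ := lt_of_le_of_lt (le_max_left _ _) hq
    have hq2 : dist q.2 (fbar, Vbar) < ρ := lt_of_le_of_lt (le_max_right _ _) hq
    rw [Prod.dist_eq] at hq2
    have hq22 : dist q.2.2 Vbar < ρ := lt_of_le_of_lt (le_max_right _ _) hq2
    apply hcore
    · intro i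
      have := dist_le_pi_dist q.1 δbar i
      rw [Real.dist_eq] at this
      linarith
    · intro i
      have := dist_le_pi_dist q.2.2 Vbar i
      rw [Real.dist_eq] at this
      linarith
  refine hev.mono ?_
  intro q hq
  simpa [part1] using hq
end

section
/- (Incremental cyclo-passivity of the power network) Let n ≥ 1, let G be a simple graph on {1,…,n} with neighbor sets N_i, X_{di} > X'_{di}, B_{ij} = B_{ji} < 0 for adjacent i ≠ j (B_{ij} = 0 otherwise), B_{ii} = Σ_{j∈N_i} B_{ij}, and T_{pi} > 0, K_{pi} > 0, T_{Vi} > 0, Ē_{fi} ∈ ℝ, P_{di} ∈ ℝ for all i. Let I ⊆ ℝ be an open interval, let δ, f, V : I → ℝ^n be differentiable and P_t : I → ℝ^n be continuous, satisfying for all t ∈ I and all i: δ̇_i = f_i; T_{pi} ḟ_i = −f_i + K_{pi}(P_{ti} − P_{di} + Σ_{j∈N_i} V_i V_j B_{ij} sin(δ_i − δ_j)); T_{Vi} V̇_i = Ē_{fi} − (1 − (X_{di} − X'_{di})B_{ii})V_i − (X_{di} − X'_{di}) Σ_{j∈N_i} V_j B_{ij} cos(δ_i − δ_j). Let δ̄,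 V̄, P̄_t ∈ ℝ^n and f* ∈ ℝ be constants with f̄ := f*·(1,…,1) satisfying, for all i: 0 = −f̄_i + K_{pi}(P̄_{ti} − P_{di} + Σ_{j∈N_i} V̄_i V̄_j B_{ij} sin(δ̄_i − δ̄_j)) and 0 = Ē_{fi} − (1 − (X_{di} − X'_{di})B_{ii})V̄_i − (X_{di} − X'_{di}) Σ_{j∈N_i} V̄_j B_{ij} cos(δ̄_i − δ̄_j). Then the function t ↦ 𝒮₁(δ(t), f(t), V(t)) is differentiable on I with derivative equal to −Σ_i (f_i(t) − f̄_i)²/K_{pi} − Σ_i (T_{Vi}/(X_{di} − X'_{di})) V̇_i(t)² + Σ_i (f_i(t) − f̄_i)(P_{ti}(t) − P̄_{ti}). -/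
open Finset

private lemma sum_sum_eq_zero {n : ℕ} (g : Fin n → Fin n → ℝ)
    (hg : ∀ i j, g i j = - g j i) : ∑ i, ∑ j, g i j = 0 := by
  have h : ∑ i, ∑ j, g i j = - ∑ i, ∑ j, g i j := by
    calc ∑ i, ∑ j, g i j = ∑ j, ∑ i, g i j := Finset.sum_comm
      _ = ∑ j, ∑ i, -g j i :=
          Finset.sum_congr rfl fun j _ => Finset.sum_congr rfl fun i _ => hg i j
      _ = - ∑ j, ∑ i, g j i := by simp
      _ = - ∑ i, ∑ j, g i j := rfl
  linarith

private lemma key_antisym {n : ℕ} (M : Fin n → Fin n → ℝ)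
    (hM : ∀ i j, M i j = - M j i) (F : Fin n → ℝ) (c : ℝ) :
    ∑ i, ∑ j, (F i - c) * M i j = (1/2) * ∑ i, ∑ j, M i j * (F i - F j) := by
  have h0 : ∑ i, ∑ j, M i j = 0 := sum_sum_eq_zero M hM
  have h1 : ∑ i, ∑ j, (M i j * (F i + F j)) = 0 :=
    sum_sum_eq_zero _ (fun i j => by rw [hM i j]; ring)
  have h2 : ∑ i, ∑ j, (F i - c) * M i j
      = ∑ i, ∑ j, ((1/2) * (M i j * (F i - F j)) + (1/2) * (M i j * (F i + F j)) - c * M i j) :=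
    Finset.sum_congr rfl fun i _ => Finset.sum_congr rfl fun j _ => by ring
  rw [h2]
  simp only [Finset.sum_add_distrib, Finset.sum_sub_distrib, ← Finset.mul_sum]
  rw [h0, h1]
  ring

private lemma stmt6_aux (n : ℕ) (G : SimpleGraph (Fin n)) [DecidableRel G.Adj]
    (Xd Xd' : Fin n → ℝ) (hX : ∀ i, Xd' i < Xd i)
    (B : Fin n → Fin n → ℝ)
    (hBsym : ∀ i j, G.Adj i j → B i j = B j i)
    (hBzero : ∀ i j, i ≠ j → ¬ G.Adj i j → B i j = 0)
    (Tp Kp TV Ef Pd : Fin n → ℝ)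
    (hTp : ∀ i, 0 < Tp i) (hKp : ∀ i, 0 < Kp i) (hTV : ∀ i, 0 < TV i)
    (F F' W W' D Pt : Fin n → ℝ)
    (hfode : ∀ i, Tp i * F' i =
      -F i + Kp i * (Pt i - Pd i +
        ∑ j ∈ G.neighborFinset i, W i * W j * B i j * Real.sin (D i - D j)))
    (hVode : ∀ i, TV i * W' i =
      Ef i - (1 - (Xd i - Xd' i) * B i i) * W i -
        (Xd i - Xd' i) * ∑ j ∈ G.neighborFinset i, W j * B i j * Real.cos (D i - D j))
    (δbar Vbar Ptbar : Fin n → ℝ) (fstar : ℝ)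
    (hss2 : ∀ i, 0 = -fstar + Kp i * (Ptbar i - Pd i +
      ∑ j ∈ G.neighborFinset i, Vbar i * Vbar j * B i j * Real.sin (δbar i - δbar j)))
    (hss3 : ∀ i, 0 = Ef i - (1 - (Xd i - Xd' i) * B i i) * Vbar i -
      (Xd i - Xd' i) * ∑ j ∈ G.neighborFinset i,
        Vbar j * B i j * Real.cos (δbar i - δbar j)) :
    (1/2) * (∑ i, (Tp i / Kp i) * (((2:ℕ):ℝ) * (F i - fstar) ^ (2 - 1) * F' i))
     + (1/2) * (∑ i, ∑ j,
         ((W' i * Emat n B Xd Xd' D i j +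
           W i * (if i = j then (0:ℝ)
             else B i j * (-Real.sin (D i - D j) * (F i - F j)))) * W j
          + W i * Emat n B Xd Xd' D i j * W' j))
     - ∑ i, (∑ j, Emat n B Xd Xd' δbar i j * Vbar j) * W' i
     + (1/2) * ∑ i, ∑ j ∈ G.neighborFinset i,
         B i j * Vbar i * Vbar j * Real.sin (δbar i - δbar j) * (F i - F j)
    = -∑ i, (F i - fstar) ^ 2 / Kp i
      - ∑ i, (TV i / (Xd i - Xd' i)) * (W' i) ^ 2
      + ∑ i, (F i - fstar) * (Pt i - Ptbar i) := by
  have hc : ∀ i, Xd i - Xd' i ≠ 0 := fun i => sub_ne_zero.mpr (hX i).ne'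
  have hBsym' : ∀ i j, B i j = B j i := by
    intro i j
    rcases eq_or_ne i j with h | h
    · rw [h]
    · by_cases hadj : G.Adj i j
      · exact hBsym i j hadj
      · rw [hBzero i j h hadj, hBzero j i h.symm fun h' => hadj h'.symm]
  have hEsym : ∀ (θ : Fin n → ℝ) i j, Emat n B Xd Xd' θ i j = Emat n B Xd Xd' θ j i := by
    intro θ i j
    unfold Emat
    rcases eq_or_ne i j with h | h
    · rw [h]
    · rw [if_neg h, if_neg (Ne.symm h), hBsym' i j,
        show θ i - θ j = -(θ j - θ i) by ring, Real.cos_neg]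
  -- extension of neighbor sums over sin to full sums
  have hext : ∀ (U θ : Fin n → ℝ) (i : Fin n),
      ∑ j ∈ G.neighborFinset i, U i * U j * B i j * Real.sin (θ i - θ j)
        = ∑ j, U i * U j * B i j * Real.sin (θ i - θ j) := by
    intro U θ i
    refine Finset.sum_subset (Finset.subset_univ _) ?_
    intro j _ hj
    rcases eq_or_ne j i with h | h
    · subst h; simp
    · rw [hBzero i j (Ne.symm h) (by simpa [SimpleGraph.mem_neighborFinset] using hj)]
      ring
  -- A and Abar, antisymmetry
  set A : Fin n → Fin n → ℝ := fun i j => W i * W j * B i j * Real.sin (D i - D j) with hA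
  set Ab : Fin n → Fin n → ℝ :=
    fun i j => Vbar i * Vbar j * B i j * Real.sin (δbar i - δbar j) with hAb
  have hAanti : ∀ i j, A i j = - A j i := by
    intro i j
    simp only [hA]
    rw [hBsym' i j, show D i - D j = -(D j - D i) by ring, Real.sin_neg]
    ring
  have hAbanti : ∀ i j, Ab i j = - Ab j i := by
    intro i j
    simp only [hAb]
    rw [hBsym' i j, show δbar i - δbar j = -(δbar j - δbar i) by ring, Real.sin_neg]
    ring

  -- frequency part
  have k1 : (1/2) * (∑ i, (Tp i / Kp i) * (((2:ℕ):ℝ) * (F i - fstar) ^ (2 - 1) * F' i))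
      = -∑ i, (F i - fstar) ^ 2 / Kp i + ∑ i, (F i - fstar) * (Pt i - Ptbar i)
        + ∑ i, ∑ j, (F i - fstar) * (A i j - Ab i j) := by
    rw [Finset.mul_sum, ← Finset.sum_neg_distrib, ← Finset.sum_add_distrib,
      ← Finset.sum_add_distrib]
    refine Finset.sum_congr rfl fun i _ => ?_
    rw [← Finset.mul_sum, Finset.sum_sub_distrib]
    simp only [hA, hAb]
    rw [← hext W D i, ← hext Vbar δbar i]
    have h1 := hfode i
    have h2 := hss2 i
    have hkp := (hKp i).ne'
    field_simp
    linear_combination (2 * (F i - fstar)) * h1 - (2 * (F i - fstar)) * h2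
  -- voltage part
  have hEV : ∀ i, ∑ j, Emat n B Xd Xd' D i j * W j
      = (Ef i - TV i * W' i) / (Xd i - Xd' i) := by
    intro i
    have hsplit : ∑ j, Emat n B Xd Xd' D i j * W j
        = Emat n B Xd Xd' D i i * W i
          + ∑ j ∈ Finset.univ.erase i, Emat n B Xd Xd' D i j * W j :=
      (Finset.add_sum_erase _ _ (Finset.mem_univ i)).symm
    have hsubN : ∑ j ∈ Finset.univ.erase i, Emat n B Xd Xd' D i j * W j
        = ∑ j ∈ G.neighborFinset i, B i j * Real.cos (D i - D j) * W j := by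
      rw [Finset.sum_congr rfl (fun j hj => by
        rw [show Emat n B Xd Xd' D i j = B i j * Real.cos (D i - D j) from
          if_neg (Finset.ne_of_mem_erase hj).symm])]
      refine (Finset.sum_subset ?_ ?_).symm
      · intro j hj
        exact Finset.mem_erase.mpr
          ⟨(G.ne_of_adj (by simpa using hj)).symm, Finset.mem_univ j⟩
      · intro j hj hnj
        rw [hBzero i j (Finset.ne_of_mem_erase hj).symm
          (by simpa [SimpleGraph.mem_neighborFinset] using hnj)]
        ring
    have hv := hVode i
    rw [Finset.sum_congr rfl (fun j (_ : j ∈ G.neighborFinset i) =>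
      show W j * B i j * Real.cos (D i - D j) = B i j * Real.cos (D i - D j) * W j by ring)] at hv
    rw [hsplit, hsubN, show Emat n B Xd Xd' D i i = 1 / (Xd i - Xd' i) - B i i from if_pos rfl]
    have hci := hc i
    field_simp
    linear_combination hv
  have hEVbar : ∀ i, ∑ j, Emat n B Xd Xd' δbar i j * Vbar j
      = Ef i / (Xd i - Xd' i) := by
    intro i
    have hsplit : ∑ j, Emat n B Xd Xd' δbar i j * Vbar j
        = Emat n B Xd Xd' δbar i i * Vbar i
          + ∑ j ∈ Finset.univ.erase i, Emat n B Xd Xd' δbar i j * Vbar j :=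
      (Finset.add_sum_erase _ _ (Finset.mem_univ i)).symm
    have hsubN : ∑ j ∈ Finset.univ.erase i, Emat n B Xd Xd' δbar i j * Vbar j
        = ∑ j ∈ G.neighborFinset i, B i j * Real.cos (δbar i - δbar j) * Vbar j := by
      rw [Finset.sum_congr rfl (fun j hj => by
        rw [show Emat n B Xd Xd' δbar i j = B i j * Real.cos (δbar i - δbar j) from
          if_neg (Finset.ne_of_mem_erase hj).symm])]
      refine (Finset.sum_subset ?_ ?_).symm
      · intro j hj
        exact Finset.mem_erase.mpr
          ⟨(G.ne_of_adj (by simpa using hj)).symm, Finset.mem_univ j⟩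
      · intro j hj hnj
        rw [hBzero i j (Finset.ne_of_mem_erase hj).symm
          (by simpa [SimpleGraph.mem_neighborFinset] using hnj)]
        ring
    have hv := hss3 i
    rw [Finset.sum_congr rfl (fun j (_ : j ∈ G.neighborFinset i) =>
      show Vbar j * B i j * Real.cos (δbar i - δbar j)
        = B i j * Real.cos (δbar i - δbar j) * Vbar j by ring)] at hv
    rw [hsplit, hsubN, show Emat n B Xd Xd' δbar i i = 1 / (Xd i - Xd' i) - B i i from if_pos rfl]
    have hci := hc i
    field_simp
    linear_combination hv
  have hX2 : ∑ i, ∑ j, W i * Emat n B Xd Xd' D i j * W' j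
      = ∑ i, ∑ j, W' i * Emat n B Xd Xd' D i j * W j := by
    rw [Finset.sum_comm]
    exact Finset.sum_congr rfl fun i _ => Finset.sum_congr rfl fun j _ => by
      rw [hEsym D j i]; ring
  have h2split : ∑ i, ∑ j,
        ((W' i * Emat n B Xd Xd' D i j +
          W i * (if i = j then (0:ℝ)
            else B i j * (-Real.sin (D i - D j) * (F i - F j)))) * W j
         + W i * Emat n B Xd Xd' D i j * W' j)
      = (∑ i, ∑ j, (W' i * Emat n B Xd Xd' D i j * W j + W i * Emat n B Xd Xd' D i j * W' j))
        + ∑ i, ∑ j, (-(A i j * (F i - F j))) := by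
    rw [← Finset.sum_add_distrib]
    refine Finset.sum_congr rfl fun i _ => ?_
    rw [← Finset.sum_add_distrib]
    refine Finset.sum_congr rfl fun j _ => ?_
    simp only [hA]
    rcases eq_or_ne i j with h | h
    · subst h
      rw [if_pos rfl]; ring
    · rw [if_neg h]; ring
  have k2 : (1/2) * (∑ i, ∑ j, (W' i * Emat n B Xd Xd' D i j * W j
          + W i * Emat n B Xd Xd' D i j * W' j))
        - ∑ i, (∑ j, Emat n B Xd Xd' δbar i j * Vbar j) * W' i
      = - ∑ i, (TV i / (Xd i - Xd' i)) * (W' i) ^ 2 := by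
    have hSa : ∑ i, ∑ j, (W' i * Emat n B Xd Xd' D i j * W j
          + W i * Emat n B Xd Xd' D i j * W' j)
        = 2 * ∑ i, W' i * ((Ef i - TV i * W' i) / (Xd i - Xd' i)) := by
      simp only [Finset.sum_add_distrib]
      rw [hX2]
      have hrow : ∑ i, ∑ j, W' i * Emat n B Xd Xd' D i j * W j
          = ∑ i, W' i * ((Ef i - TV i * W' i) / (Xd i - Xd' i)) := by
        refine Finset.sum_congr rfl fun i _ => ?_
        rw [← hEV i, Finset.mul_sum]
        exact Finset.sum_congr rfl fun j _ => by ring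
      rw [hrow]; ring
    rw [hSa]
    have hT4 : ∑ i, (∑ j, Emat n B Xd Xd' δbar i j * Vbar j) * W' i
        = ∑ i, (Ef i / (Xd i - Xd' i)) * W' i :=
      Finset.sum_congr rfl fun i _ => by rw [hEVbar i]
    rw [hT4,
      show (1/2:ℝ) * (2 * ∑ i, W' i * ((Ef i - TV i * W' i) / (Xd i - Xd' i)))
        = ∑ i, W' i * ((Ef i - TV i * W' i) / (Xd i - Xd' i)) by ring,
      ← Finset.sum_neg_distrib, ← Finset.sum_sub_distrib]
    refine Finset.sum_congr rfl fun i _ => ?_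
    have hci := hc i
    field_simp
    ring
  have kW : ∑ i, ∑ j, (F i - fstar) * (A i j - Ab i j)
      = (1/2) * ∑ i, ∑ j, (A i j - Ab i j) * (F i - F j) :=
    key_antisym (fun i j => A i j - Ab i j)
      (fun i j => by
        show A i j - Ab i j = -(A j i - Ab j i)
        rw [hAanti i j, hAbanti i j]; ring) F fstar
  have ksplit : ∑ i, ∑ j, (A i j - Ab i j) * (F i - F j)
      = ∑ i, ∑ j, A i j * (F i - F j) - ∑ i, ∑ j, Ab i j * (F i - F j) := by
    simp only [sub_mul]
    simp only [Finset.sum_sub_distrib]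
  have kS2b : ∑ i, ∑ j, (-(A i j * (F i - F j))) = - ∑ i, ∑ j, A i j * (F i - F j) := by
    simp
  have kT5 : ∑ i, ∑ j ∈ G.neighborFinset i,
        B i j * Vbar i * Vbar j * Real.sin (δbar i - δbar j) * (F i - F j)
      = ∑ i, ∑ j, Ab i j * (F i - F j) := by
    refine Finset.sum_congr rfl fun i _ => ?_
    rw [Finset.sum_congr rfl (fun j (_ : j ∈ G.neighborFinset i) =>
      show B i j * Vbar i * Vbar j * Real.sin (δbar i - δbar j) * (F i - F j)
        = Ab i j * (F i - F j) by simp only [hAb]; ring)]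
    refine Finset.sum_subset (Finset.subset_univ _) ?_
    intro j _ hj
    rcases eq_or_ne j i with h | h
    · subst h; simp [hAb]
    · simp only [hAb]
      rw [hBzero i j (Ne.symm h) (by simpa [SimpleGraph.mem_neighborFinset] using hj)]
      ring
  rw [h2split, kT5]
  linarith [k1, k2, kW, ksplit, kS2b]

/-- Incremental cyclo-passivity of the power network: along any solution of
the flux-decay model of the lossless power network on the open interval `(a, b)`, and for
any steady state `(δ̄, f̄ = f*·𝟙, V̄, P̄t)`, the function
`t ↦ 𝒮₁(δ(t), f(t), V(t))` is differentiable with derivative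
`-∑ i (f i - f*)²/Kp i - ∑ i (TV i/(Xd i - Xd' i)) V̇ i² + ∑ i (f i - f*)(Pt i - P̄t i)`. -/
theorem stmt6 (n : ℕ) (hn : 1 ≤ n) (G : SimpleGraph (Fin n)) [DecidableRel G.Adj]
    (Xd Xd' : Fin n → ℝ) (hX : ∀ i, Xd' i < Xd i)
    (B : Fin n → Fin n → ℝ)
    (hBsym : ∀ i j, G.Adj i j → B i j = B j i)
    (hBneg : ∀ i j, G.Adj i j → B i j < 0)
    (hBzero : ∀ i j, i ≠ j → ¬ G.Adj i j → B i j = 0)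
    (hBii : ∀ i, B i i = ∑ j ∈ G.neighborFinset i, B i j)
    (Tp Kp TV Ef Pd : Fin n → ℝ)
    (hTp : ∀ i, 0 < Tp i) (hKp : ∀ i, 0 < Kp i) (hTV : ∀ i, 0 < TV i)
    (a b : ℝ)
    (δ f V f' V' : ℝ → Fin n → ℝ) (Pt : ℝ → Fin n → ℝ)
    (hPtcont : ∀ i, ContinuousOn (fun t => Pt t i) (Set.Ioo a b))
    (hδ : ∀ t ∈ Set.Ioo a b, ∀ i, HasDerivAt (fun s => δ s i) (f t i) t)
    (hf : ∀ t ∈ Set.Ioo a b, ∀ i, HasDerivAt (fun s => f s i) (f' t i) t)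
    (hfode : ∀ t ∈ Set.Ioo a b, ∀ i, Tp i * f' t i =
      -f t i + Kp i * (Pt t i - Pd i +
        ∑ j ∈ G.neighborFinset i, V t i * V t j * B i j * Real.sin (δ t i - δ t j)))
    (hV : ∀ t ∈ Set.Ioo a b, ∀ i, HasDerivAt (fun s => V s i) (V' t i) t)
    (hVode : ∀ t ∈ Set.Ioo a b, ∀ i, TV i * V' t i =
      Ef i - (1 - (Xd i - Xd' i) * B i i) * V t i -
        (Xd i - Xd' i) * ∑ j ∈ G.neighborFinset i, V t j * B i j * Real.cos (δ t i - δ t j))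
    (δbar Vbar Ptbar : Fin n → ℝ) (fstar : ℝ)
    (hss2 : ∀ i, 0 = -fstar + Kp i * (Ptbar i - Pd i +
      ∑ j ∈ G.neighborFinset i, Vbar i * Vbar j * B i j * Real.sin (δbar i - δbar j)))
    (hss3 : ∀ i, 0 = Ef i - (1 - (Xd i - Xd' i) * B i i) * Vbar i -
      (Xd i - Xd' i) * ∑ j ∈ G.neighborFinset i,
        Vbar j * B i j * Real.cos (δbar i - δbar j)) :
    ∀ t ∈ Set.Ioo a b,
      HasDerivAt
        (fun s => storage1 n G B Xd Xd' Tp Kp δbar (fun _ => fstar) Vbar (δ s) (f s) (V s))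
        (-∑ i, (f t i - fstar) ^ 2 / Kp i
          - ∑ i, (TV i / (Xd i - Xd' i)) * (V' t i) ^ 2
          + ∑ i, (f t i - fstar) * (Pt t i - Ptbar i)) t := by
  intro t ht
  have hδt := hδ t ht
  have hft := hf t ht
  have hVt := hV t ht
  have hE : ∀ i j, HasDerivAt (fun s => Emat n B Xd Xd' (δ s) i j)
      (if i = j then (0:ℝ) else B i j * (-Real.sin (δ t i - δ t j) * (f t i - f t j))) t := by
    intro i j
    rcases eq_or_ne i j with h | h
    · simp only [Emat, if_pos h]
      exact hasDerivAt_const t _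
    · simp only [Emat, if_neg h]
      exact (((hδt i).sub (hδt j)).cos).const_mul (B i j)
  have H1 : HasDerivAt (fun s => ∑ i, (Tp i / Kp i) * (f s i - fstar) ^ 2)
      (∑ i, (Tp i / Kp i) * (((2:ℕ):ℝ) * (f t i - fstar) ^ (2 - 1) * f' t i)) t :=
    HasDerivAt.fun_sum fun i _ => (((hft i).sub_const fstar).fun_pow 2).const_mul _
  have H2 : HasDerivAt (fun s => ∑ i, ∑ j, V s i * Emat n B Xd Xd' (δ s) i j * V s j)
      (∑ i, ∑ j,
        ((V' t i * Emat n B Xd Xd' (δ t) i j +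
          V t i * (if i = j then (0:ℝ)
            else B i j * (-Real.sin (δ t i - δ t j) * (f t i - f t j)))) * V t j
         + V t i * Emat n B Xd Xd' (δ t) i j * V' t j)) t :=
    HasDerivAt.fun_sum fun i _ => HasDerivAt.fun_sum fun j _ => ((hVt i).fun_mul (hE i j)).fun_mul (hVt j)
  have H4 : HasDerivAt
      (fun s => ∑ i, (∑ j, Emat n B Xd Xd' δbar i j * Vbar j) * (V s i - Vbar i))
      (∑ i, (∑ j, Emat n B Xd Xd' δbar i j * Vbar j) * V' t i) t :=
    HasDerivAt.fun_sum fun i _ => ((hVt i).sub_const (Vbar i)).const_mul _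
  have H5 : HasDerivAt
      (fun s => ∑ i, ∑ j ∈ G.neighborFinset i,
        B i j * Vbar i * Vbar j * Real.sin (δbar i - δbar j) *
          ((δ s i - δ s j) - (δbar i - δbar j)))
      (∑ i, ∑ j ∈ G.neighborFinset i,
        B i j * Vbar i * Vbar j * Real.sin (δbar i - δbar j) * (f t i - f t j)) t :=
    HasDerivAt.fun_sum fun i _ => HasDerivAt.fun_sum fun j _ =>
      (((hδt i).fun_sub (hδt j)).sub_const _).const_mul _
  have H := ((((H1.const_mul (1/2:ℝ)).fun_add (H2.const_mul (1/2:ℝ))).sub_const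
      ((1/2) * ∑ i, ∑ j, Vbar i * Emat n B Xd Xd' δbar i j * Vbar j)).fun_sub H4).fun_add
      (H5.const_mul (1/2:ℝ))
  have heq := stmt6_aux n G Xd Xd' hX B hBsym hBzero Tp Kp TV Ef Pd hTp hKp hTV
    (f t) (f' t) (V t) (V' t) (δ t) (Pt t)
    (fun i => hfode t ht i) (fun i => hVode t ht i) δbar Vbar Ptbar fstar hss2 hss3
  rw [← heq]
  simpa only [storage1] using H
end

section
/- (Incremental passivity of the equivalent reduced system) Let n ≥ 1 and let G^{com} be a simple graph on {1,…,n} with neighbor sets N_i^{com}; write (Lx)_i = Σ_{j∈N_i^{com}}(x_i − x_j) for its Laplacian. For each i let M_{1i} > 0, M_{2i} ≥ 0, M_{3i} > 0, M_{4i} = −(M_{2i}+M_{3i}), T_{ti} > 0, T_{θi} > 0, Q_i > 0 and R_i ∈ ℝ. Let I ⊆ ℝ be an open interval, f : I → ℝ^n continuous, and P, θ : I → ℝ^n differentiable, satisfying for all t ∈ I and all i: M_{3i} T_{ti} Ṗ_i = −(M_{2i}+M_{3i})P_i − M_{4i}θ_i − M_{1i}f_i and T_{θi} θ̇_i = −θ_i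 + P_i − (M_{1i}Q_i/(M_{2i}+M_{3i}))·(L(Qθ+R))_i, where Qθ+R is the vector with entries Q_jθ_j + R_j. Let P̄, θ̄ ∈ ℝ^n be constants with, for all i: 0 = −(M_{2i}+M_{3i})P̄_i − M_{4i}θ̄_i and 0 = −θ̄_i + P̄_i − (M_{1i}Q_i/(M_{2i}+M_{3i}))·(L(Qθ̄+R))_i. Then S₂(t) := ½ Σ_i (M_{3i}T_{ti}/M_{1i})(P_i(t) − P̄_i)² + ½ Σ_i ((M_{2i}+M_{3i})T_{θi}/M_{1i})(θ_i(t) − θ̄_i)² is differentiable on I with Ṡ₂(t) = −Σ_i ((M_{2i}+M_{3i})/M_{1i})(P_i − θ_i)² − Σ_{{i,j}∈E(G^{com})} (Q_i(θ_i − θ̄_i) − Q_j(θ_j − θ̄_j))² − Σ_i (P_i − P̄_i) f_i; in particular, Ṡ₂(t) ≤ Σ_i (P_i(t) − P̄_i)(−f_i(t)), i.e., the system with input −f and output P is incrementally passive with respect to (P̄, θ̄). -/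
open Finset

lemma graph_swap {n : ℕ} (Gc : SimpleGraph (Fin n)) [DecidableRel Gc.Adj]
    (g : Fin n → Fin n → ℝ) :
    ∑ i, ∑ j ∈ Gc.neighborFinset i, g i j = ∑ i, ∑ j ∈ Gc.neighborFinset i, g j i := by
  have key : ∀ h : Fin n → Fin n → ℝ, ∑ i, ∑ j ∈ Gc.neighborFinset i, h i j
      = ∑ i : Fin n, ∑ j : Fin n, if Gc.Adj i j then h i j else 0 := by
    intro h
    refine Finset.sum_congr rfl fun i _ => ?_
    rw [SimpleGraph.neighborFinset_eq_filter, Finset.sum_filter]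
  rw [key, key, Finset.sum_comm]
  exact Finset.sum_congr rfl fun i _ => Finset.sum_congr rfl fun j _ => by
    exact if_congr (Gc.adj_comm j i) rfl rfl

lemma graph_quad {n : ℕ} (Gc : SimpleGraph (Fin n)) [DecidableRel Gc.Adj]
    (u : Fin n → ℝ) :
    ∑ i, ∑ j ∈ Gc.neighborFinset i, u i * (u i - u j)
      = (1/2) * ∑ i, ∑ j ∈ Gc.neighborFinset i, (u i - u j)^2 := by
  have h := graph_swap Gc (fun i j => u i * (u i - u j))
  have h2 : ∑ i, ∑ j ∈ Gc.neighborFinset i, (u i - u j)^2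
      = ∑ i, ∑ j ∈ Gc.neighborFinset i, (u i * (u i - u j) + u j * (u j - u i)) := by
    exact Finset.sum_congr rfl fun i _ => Finset.sum_congr rfl fun j _ => by ring
  have h3 : ∑ i, ∑ j ∈ Gc.neighborFinset i, (u i * (u i - u j) + u j * (u j - u i))
      = ∑ i, ∑ j ∈ Gc.neighborFinset i, u i * (u i - u j)
        + ∑ i, ∑ j ∈ Gc.neighborFinset i, u j * (u j - u i) := by
    rw [← Finset.sum_add_distrib]
    exact Finset.sum_congr rfl fun i _ => Finset.sum_add_distrib
  rw [h2, h3]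
  linarith [h]

/-- Incremental passivity of the equivalent reduced system: along solutions of
the reduced turbine dynamics interconnected with the distributed consensus controller on the
communication graph `Gc` (with Laplacian `(Lx) i = ∑_{j ∈ N_i^{com}} (x i - x j)`), the
incremental storage `S₂` is differentiable with
`Ṡ₂ = -∑ i ((M2 i + M3 i)/M1 i)(P i - θ i)² - ∑_{edges {i,j}} (Q i (θ i - θ̄ i) - Q j (θ j - θ̄ j))²
      - ∑ i (P i - P̄ i) f i ≤ ∑ i (P i - P̄ i)(-f i)`;
the sum over unordered edges (each counted once) is written as half the double sum over
ordered adjacent pairs, the summand being symmetric. -/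
theorem stmt8 (n : ℕ) (hn : 1 ≤ n) (Gc : SimpleGraph (Fin n)) [DecidableRel Gc.Adj]
    (M1 M2 M3 M4 Tt Tθ Q R : Fin n → ℝ)
    (hM1 : ∀ i, 0 < M1 i) (hM2 : ∀ i, 0 ≤ M2 i) (hM3 : ∀ i, 0 < M3 i)
    (hM4 : ∀ i, M4 i = -(M2 i + M3 i)) (hTt : ∀ i, 0 < Tt i) (hTθ : ∀ i, 0 < Tθ i)
    (hQ : ∀ i, 0 < Q i)
    (a b : ℝ) (f P θ P' θ' : ℝ → Fin n → ℝ)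
    (hf : ∀ i, ContinuousOn (fun t => f t i) (Set.Ioo a b))
    (hP : ∀ t ∈ Set.Ioo a b, ∀ i, HasDerivAt (fun s => P s i) (P' t i) t)
    (hθ : ∀ t ∈ Set.Ioo a b, ∀ i, HasDerivAt (fun s => θ s i) (θ' t i) t)
    (hPode : ∀ t ∈ Set.Ioo a b, ∀ i, M3 i * Tt i * P' t i =
      -(M2 i + M3 i) * P t i - M4 i * θ t i - M1 i * f t i)
    (hθode : ∀ t ∈ Set.Ioo a b, ∀ i, Tθ i * θ' t i =
      -θ t i + P t i - (M1 i * Q i / (M2 i + M3 i)) *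
        ∑ j ∈ Gc.neighborFinset i, ((Q i * θ t i + R i) - (Q j * θ t j + R j)))
    (Pbar θbar : Fin n → ℝ)
    (hPbar : ∀ i, 0 = -(M2 i + M3 i) * Pbar i - M4 i * θbar i)
    (hθbar : ∀ i, 0 = -θbar i + Pbar i - (M1 i * Q i / (M2 i + M3 i)) *
      ∑ j ∈ Gc.neighborFinset i, ((Q i * θbar i + R i) - (Q j * θbar j + R j))) :
    ∀ t ∈ Set.Ioo a b,
      HasDerivAt
        (fun s => (1 / 2) * ∑ i, (M3 i * Tt i / M1 i) * (P s i - Pbar i) ^ 2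
          + (1 / 2) * ∑ i, ((M2 i + M3 i) * Tθ i / M1 i) * (θ s i - θbar i) ^ 2)
        (-∑ i, ((M2 i + M3 i) / M1 i) * (P t i - θ t i) ^ 2
          - (1 / 2) * ∑ i, ∑ j ∈ Gc.neighborFinset i,
              (Q i * (θ t i - θbar i) - Q j * (θ t j - θbar j)) ^ 2
          - ∑ i, (P t i - Pbar i) * f t i) t ∧
      (-∑ i, ((M2 i + M3 i) / M1 i) * (P t i - θ t i) ^ 2
          - (1 / 2) * ∑ i, ∑ j ∈ Gc.neighborFinset i,
              (Q i * (θ t i - θbar i) - Q j * (θ t j - θbar j)) ^ 2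
          - ∑ i, (P t i - Pbar i) * f t i)
        ≤ ∑ i, (P t i - Pbar i) * (-f t i) := by

  intro t ht
  have hM1ne : ∀ i, M1 i ≠ 0 := fun i => (hM1 i).ne'
  have hmpos : ∀ i, 0 < M2 i + M3 i := fun i => add_pos_of_nonneg_of_pos (hM2 i) (hM3 i)
  have hmne : ∀ i, M2 i + M3 i ≠ 0 := fun i => (hmpos i).ne'
  -- steady state: Pbar = θbar
  have hbar : ∀ i, Pbar i = θbar i := by
    intro i
    have h := hPbar i
    rw [hM4 i] at h
    have h2 : (M2 i + M3 i) * (Pbar i - θbar i) = 0 := by linear_combination h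
    rcases mul_eq_zero.mp h2 with h3 | h3
    · exact absurd h3 (hmne i)
    · linarith
  -- explicit form of P'
  have hP' : ∀ i, P' t i = (-(M2 i + M3 i) * P t i + (M2 i + M3 i) * θ t i
      - M1 i * f t i) / (M3 i * Tt i) := by
    intro i
    have hode := hPode t ht i
    rw [hM4 i] at hode
    rw [eq_div_iff (mul_pos (hM3 i) (hTt i)).ne']
    linear_combination hode
  -- difference of coupling sums
  have hSS : ∀ i, (∑ j ∈ Gc.neighborFinset i, ((Q i * θ t i + R i) - (Q j * θ t j + R j)))
      - (∑ j ∈ Gc.neighborFinset i, ((Q i * θbar i + R i) - (Q j * θbar j + R j)))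
      = ∑ j ∈ Gc.neighborFinset i, (Q i * (θ t i - θbar i) - Q j * (θ t j - θbar j)) := by
    intro i
    rw [← Finset.sum_sub_distrib]
    exact Finset.sum_congr rfl fun j _ => by ring
  -- explicit form of θ'
  have hθ' : ∀ i, θ' t i = (-(θ t i - θbar i) + (P t i - Pbar i)
      - (M1 i * Q i / (M2 i + M3 i)) * ∑ j ∈ Gc.neighborFinset i,
          (Q i * (θ t i - θbar i) - Q j * (θ t j - θbar j))) / Tθ i := by
    intro i
    have h1 := hθode t ht i
    have h2 := hθbar i
    rw [eq_div_iff (hTθ i).ne']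
    linear_combination h1 - h2 - (M1 i * Q i / (M2 i + M3 i)) * hSS i
  -- derivative of the first sum
  have h1 : HasDerivAt (fun s => ∑ i, (M3 i * Tt i / M1 i) * (P s i - Pbar i) ^ 2)
      (∑ i, (-2 * ((M2 i + M3 i) / M1 i) * (P t i - Pbar i) * (P t i - θ t i)
        - 2 * ((P t i - Pbar i) * f t i))) t := by
    refine HasDerivAt.fun_sum fun i _ => ?_
    have hd := (((hP t ht i).sub_const (Pbar i)).pow 2).const_mul (M3 i * Tt i / M1 i)
    refine hd.congr_deriv ?_
    rw [hP' i]
    have e1 := hM1ne i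
    have e2 := (hM3 i).ne'
    have e3 := (hTt i).ne'
    push_cast
    field_simp
    ring
  -- derivative of the second sum
  have h2 : HasDerivAt (fun s => ∑ i, ((M2 i + M3 i) * Tθ i / M1 i) * (θ s i - θbar i) ^ 2)
      (∑ i, (-2 * ((M2 i + M3 i) / M1 i) * (θ t i - θbar i) * ((θ t i - θbar i) - (P t i - Pbar i))
        - 2 * ∑ j ∈ Gc.neighborFinset i, (Q i * (θ t i - θbar i)) *
            (Q i * (θ t i - θbar i) - Q j * (θ t j - θbar j)))) t := by
    refine HasDerivAt.fun_sum fun i _ => ?_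
    have hd := (((hθ t ht i).sub_const (θbar i)).pow 2).const_mul ((M2 i + M3 i) * Tθ i / M1 i)
    refine hd.congr_deriv ?_
    rw [hθ' i]
    rw [show ∑ j ∈ Gc.neighborFinset i, (Q i * (θ t i - θbar i)) *
        (Q i * (θ t i - θbar i) - Q j * (θ t j - θbar j))
      = (Q i * (θ t i - θbar i)) * ∑ j ∈ Gc.neighborFinset i,
        (Q i * (θ t i - θbar i) - Q j * (θ t j - θbar j)) from (Finset.mul_sum _ _ _).symm]
    have e1 := hM1ne i
    have e2 := hmne i
    have e3 := (hTθ i).ne'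
    push_cast
    field_simp
    ring
  have hder := (h1.const_mul ((1:ℝ)/2)).add (h2.const_mul ((1:ℝ)/2))
  -- algebraic identity for the derivative value
  have hQuad := graph_quad Gc (fun i => Q i * (θ t i - θbar i))
  have hcomb : ∑ i, (-2 * ((M2 i + M3 i) / M1 i) * (P t i - Pbar i) * (P t i - θ t i)
        - 2 * ((P t i - Pbar i) * f t i))
      + ∑ i, (-2 * ((M2 i + M3 i) / M1 i) * (θ t i - θbar i) * ((θ t i - θbar i) - (P t i - Pbar i))
        - 2 * ∑ j ∈ Gc.neighborFinset i, (Q i * (θ t i - θbar i)) *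
            (Q i * (θ t i - θbar i) - Q j * (θ t j - θbar j)))
      = ∑ i, (-2 * (((M2 i + M3 i) / M1 i) * (P t i - θ t i) ^ 2)
          + -2 * ((P t i - Pbar i) * f t i)
          + -2 * ∑ j ∈ Gc.neighborFinset i, (Q i * (θ t i - θbar i)) *
              (Q i * (θ t i - θbar i) - Q j * (θ t j - θbar j))) := by
    rw [← Finset.sum_add_distrib]
    refine Finset.sum_congr rfl fun i _ => ?_
    rw [hbar i]
    ring
  have hsplit : ∑ i, (-2 * (((M2 i + M3 i) / M1 i) * (P t i - θ t i) ^ 2)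
          + -2 * ((P t i - Pbar i) * f t i)
          + -2 * ∑ j ∈ Gc.neighborFinset i, (Q i * (θ t i - θbar i)) *
              (Q i * (θ t i - θbar i) - Q j * (θ t j - θbar j)))
      = -2 * ∑ i, ((M2 i + M3 i) / M1 i) * (P t i - θ t i) ^ 2
        + -2 * ∑ i, (P t i - Pbar i) * f t i
        + -2 * ∑ i, ∑ j ∈ Gc.neighborFinset i, (Q i * (θ t i - θbar i)) *
              (Q i * (θ t i - θbar i) - Q j * (θ t j - θbar j)) := by
    rw [Finset.sum_add_distrib, Finset.sum_add_distrib, ← Finset.mul_sum, ← Finset.mul_sum,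
      ← Finset.mul_sum]
  constructor
  · refine hder.congr_deriv ?_
    linarith [hcomb, hsplit, hQuad]
  · have hA : 0 ≤ ∑ i, ((M2 i + M3 i) / M1 i) * (P t i - θ t i) ^ 2 := by
      refine Finset.sum_nonneg fun i _ => ?_
      have := hmpos i
      have := hM1 i
      positivity
    have hB : 0 ≤ ∑ i, ∑ j ∈ Gc.neighborFinset i,
        (Q i * (θ t i - θbar i) - Q j * (θ t j - θbar j)) ^ 2 :=
      Finset.sum_nonneg fun i _ => Finset.sum_nonneg fun j _ => sq_nonneg _
    have hC : ∑ i, (P t i - Pbar i) * (-f t i) = -∑ i, (P t i - Pbar i) * f t i := by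
      rw [← Finset.sum_neg_distrib]
      exact Finset.sum_congr rfl fun i _ => by ring
    rw [hC]
    linarith
end

section
/- (Storage identity for the primal-dual based scheme) Let n, m ≥ 1, B ∈ ℝ^{n×m}, and for each i let M_{1i} > 0, M_{2i} ≥ 0, M_{3i} > 0, M_{4i} = −(M_{2i}+M_{3i}), T_{ti} > 0, T_{θi} > 0, and let P_d ∈ ℝ^n. Let C : ℝ^n → ℝ be differentiable with gradient ∇C. Let I ⊆ ℝ be an open interval, f : I → ℝ^n continuous, and P, θ, λ : I → ℝ^n, v : I → ℝ^m differentiable, satisfying for all t ∈ I: M_{3i}T_{ti}Ṗ_i = −(M_{2i}+M_{3i})P_i − M_{4i}θ_i − M_{1i}f_i; T_{θi}θ̇_i = −θ_i + P_i − (M_{1i}/(M_{2i}+M_{3i}))((∇C(θ))_i − λ_i); v̇ = −Bᵀλ; λ̇ = Bv − θ + P_d. Let P̄, θ̄, λ̄ ∈ ℝ^n and v̄ ∈ ℝ^m be constants with P̄ = θ̄, 0 = −θ̄_i + P̄_i − (M_{1i}/(M_{2i}+M_{3i}))((∇C(θ̄))_i − λ̄_i) for all i, Bᵀλ̄ = 0,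 and Bv̄ − θ̄ + P_d = 0. Then the function t ↦ S₂(t) + S₃(t), where S₂(t) = ½Σ_i(M_{3i}T_{ti}/M_{1i})(P_i − P̄_i)² + ½Σ_i((M_{2i}+M_{3i})T_{θi}/M_{1i})(θ_i − θ̄_i)² and S₃(t) = ½‖v(t) − v̄‖² + ½‖λ(t) − λ̄‖², is differentiable on I with derivative equal to −Σ_i((M_{2i}+M_{3i})/M_{1i})(P_i − θ_i)² − (θ − θ̄)ᵀ(∇C(θ) − ∇C(θ̄)) − Σ_i(P_i − P̄_i)f_i. -/
open Finset

/-- Storage identity for the primal-dual based scheme: along solutions of the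
reduced turbine dynamics interconnected with the primal-dual controller
(`T_θ θ̇ = -θ + P - M1(M2+M3)⁻¹(∇C(θ) - λ)`, `v̇ = -Bᵀλ`, `λ̇ = Bv - θ + Pd`), and for a
steady state `(P̄ = θ̄, θ̄, v̄, λ̄)` with zero frequency deviation, the total storage
`S₂ + S₃` is differentiable with derivative
`-∑ i ((M2 i + M3 i)/M1 i)(P i - θ i)² - (θ - θ̄)ᵀ(∇C(θ) - ∇C(θ̄)) - ∑ i (P i - P̄ i) f i`. -/
theorem stmt10 (n m : ℕ) (hn : 1 ≤ n) (hm : 1 ≤ m)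
    (B : Fin n → Fin m → ℝ)
    (M1 M2 M3 M4 Tt Tθ : Fin n → ℝ)
    (hM1 : ∀ i, 0 < M1 i) (hM2 : ∀ i, 0 ≤ M2 i) (hM3 : ∀ i, 0 < M3 i)
    (hM4 : ∀ i, M4 i = -(M2 i + M3 i)) (hTt : ∀ i, 0 < Tt i) (hTθ : ∀ i, 0 < Tθ i)
    (Pd : Fin n → ℝ)
    (C : (Fin n → ℝ) → ℝ) (gradC : (Fin n → ℝ) → Fin n → ℝ)
    (hC : ∀ x : Fin n → ℝ, ∃ L : (Fin n → ℝ) →L[ℝ] ℝ,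
      HasFDerivAt C L x ∧ ∀ w : Fin n → ℝ, L w = ∑ i, gradC x i * w i)
    (a b : ℝ) (f P θ lamv P' θ' lam' : ℝ → Fin n → ℝ) (v v' : ℝ → Fin m → ℝ)
    (hf : ∀ i, ContinuousOn (fun t => f t i) (Set.Ioo a b))
    (hP : ∀ t ∈ Set.Ioo a b, ∀ i, HasDerivAt (fun s => P s i) (P' t i) t)
    (hθ : ∀ t ∈ Set.Ioo a b, ∀ i, HasDerivAt (fun s => θ s i) (θ' t i) t)
    (hlam : ∀ t ∈ Set.Ioo a b, ∀ i, HasDerivAt (fun s => lamv s i) (lam' t i) t)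
    (hv : ∀ t ∈ Set.Ioo a b, ∀ k, HasDerivAt (fun s => v s k) (v' t k) t)
    (hPode : ∀ t ∈ Set.Ioo a b, ∀ i, M3 i * Tt i * P' t i =
      -(M2 i + M3 i) * P t i - M4 i * θ t i - M1 i * f t i)
    (hθode : ∀ t ∈ Set.Ioo a b, ∀ i, Tθ i * θ' t i =
      -θ t i + P t i - (M1 i / (M2 i + M3 i)) * (gradC (θ t) i - lamv t i))
    (hvode : ∀ t ∈ Set.Ioo a b, ∀ k, v' t k = -∑ i, B i k * lamv t i)
    (hlamode : ∀ t ∈ Set.Ioo a b, ∀ i, lam' t i = ∑ k, B i k * v t k - θ t i + Pd i)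
    (Pbar θbar lambar : Fin n → ℝ) (vbar : Fin m → ℝ)
    (hPbar : ∀ i, Pbar i = θbar i)
    (hθbar : ∀ i, 0 = -θbar i + Pbar i -
      (M1 i / (M2 i + M3 i)) * (gradC θbar i - lambar i))
    (hlambar : ∀ k, ∑ i, B i k * lambar i = 0)
    (hvbar : ∀ i, ∑ k, B i k * vbar k - θbar i + Pd i = 0) :
    ∀ t ∈ Set.Ioo a b,
      HasDerivAt
        (fun s => ((1 / 2) * ∑ i, (M3 i * Tt i / M1 i) * (P s i - Pbar i) ^ 2
            + (1 / 2) * ∑ i, ((M2 i + M3 i) * Tθ i / M1 i) * (θ s i - θbar i) ^ 2)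
          + ((1 / 2) * ∑ k, (v s k - vbar k) ^ 2
            + (1 / 2) * ∑ i, (lamv s i - lambar i) ^ 2))
        (-∑ i, ((M2 i + M3 i) / M1 i) * (P t i - θ t i) ^ 2
          - ∑ i, (θ t i - θbar i) * (gradC (θ t) i - gradC θbar i)
          - ∑ i, (P t i - Pbar i) * f t i) t := by

  intro t ht
  have hane : ∀ i, (M2 i + M3 i) ≠ 0 := fun i =>
    ne_of_gt (by have := hM2 i; have := hM3 i; linarith)
  have hM1ne : ∀ i, M1 i ≠ 0 := fun i => (hM1 i).ne'
  have hgradbar : ∀ i, gradC θbar i = lambar i := by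
    intro i
    have h := hθbar i
    rw [hPbar i] at h
    have h2 : (M1 i / (M2 i + M3 i)) * (gradC θbar i - lambar i) = 0 := by linarith
    rcases mul_eq_zero.mp h2 with h3 | h3
    · exact absurd h3 (div_ne_zero (hM1ne i) (hane i))
    · linarith
  -- raw derivative
  have dP : HasDerivAt
      (fun s => (1/2 : ℝ) * ∑ i, (M3 i * Tt i / M1 i) * (P s i - Pbar i) ^ 2)
      ((1/2) * ∑ i, (M3 i * Tt i / M1 i) * (((2:ℕ):ℝ) * (P t i - Pbar i) ^ 1 * P' t i)) t := by
    apply HasDerivAt.const_mul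
    apply HasDerivAt.fun_sum
    intro i _
    exact (((hP t ht i).sub_const _).pow 2).const_mul _
  have dθ : HasDerivAt
      (fun s => (1/2 : ℝ) * ∑ i, ((M2 i + M3 i) * Tθ i / M1 i) * (θ s i - θbar i) ^ 2)
      ((1/2) * ∑ i, ((M2 i + M3 i) * Tθ i / M1 i) * (((2:ℕ):ℝ) * (θ t i - θbar i) ^ 1 * θ' t i)) t := by
    apply HasDerivAt.const_mul
    apply HasDerivAt.fun_sum
    intro i _
    exact (((hθ t ht i).sub_const _).pow 2).const_mul _
  have dv : HasDerivAt
      (fun s => (1/2 : ℝ) * ∑ k, (v s k - vbar k) ^ 2)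
      ((1/2) * ∑ k, (((2:ℕ):ℝ) * (v t k - vbar k) ^ 1 * v' t k)) t := by
    apply HasDerivAt.const_mul
    apply HasDerivAt.fun_sum
    intro k _
    exact ((hv t ht k).sub_const _).pow 2
  have dlam2 : HasDerivAt
      (fun s => (1/2 : ℝ) * ∑ i, (lamv s i - lambar i) ^ 2)
      ((1/2) * ∑ i, (((2:ℕ):ℝ) * (lamv t i - lambar i) ^ 1 * lam' t i)) t := by
    apply HasDerivAt.const_mul
    apply HasDerivAt.fun_sum
    intro i _
    exact ((hlam t ht i).sub_const _).pow 2
  have hD := (dP.fun_add dθ).fun_add (dv.fun_add dlam2)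
  refine hD.congr_deriv ?_
  -- now prove the derivative identity
  have eP : (1/2 : ℝ) * ∑ i, (M3 i * Tt i / M1 i) * (((2:ℕ):ℝ) * (P t i - Pbar i) ^ 1 * P' t i)
      = ∑ i, (-((M2 i + M3 i) / M1 i) * ((P t i - Pbar i) * (P t i - θ t i))
          - (P t i - Pbar i) * f t i) := by
    rw [Finset.mul_sum]
    refine Finset.sum_congr rfl fun i _ => ?_
    have h := hPode t ht i
    rw [hM4 i] at h
    have hP' : P' t i = (-(M2 i + M3 i) * P t i + (M2 i + M3 i) * θ t i - M1 i * f t i)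
        / (M3 i * Tt i) := by
      rw [eq_div_iff (mul_ne_zero (hM3 i).ne' (hTt i).ne')]
      linear_combination h
    rw [hP']
    field_simp [hM1ne i, (hM3 i).ne', (hTt i).ne']
    ring
  have eθ : (1/2 : ℝ) * ∑ i, ((M2 i + M3 i) * Tθ i / M1 i) * (((2:ℕ):ℝ) * (θ t i - θbar i) ^ 1 * θ' t i)
      = ∑ i, (((M2 i + M3 i) / M1 i) * ((θ t i - θbar i) * (P t i - θ t i))
          - (θ t i - θbar i) * (gradC (θ t) i - lamv t i)) := by
    rw [Finset.mul_sum]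
    refine Finset.sum_congr rfl fun i _ => ?_
    have h := hθode t ht i
    have hθ' : θ' t i = (-θ t i + P t i
        - (M1 i / (M2 i + M3 i)) * (gradC (θ t) i - lamv t i)) / Tθ i := by
      rw [eq_div_iff (hTθ i).ne']
      linear_combination h
    rw [hθ']
    field_simp [hM1ne i, hane i, (hTθ i).ne']
    ring
  have ev : (1/2 : ℝ) * ∑ k, (((2:ℕ):ℝ) * (v t k - vbar k) ^ 1 * v' t k)
      = -∑ k, (v t k - vbar k) * ∑ i, B i k * (lamv t i - lambar i) := by
    rw [Finset.mul_sum, ← Finset.sum_neg_distrib]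
    refine Finset.sum_congr rfl fun k _ => ?_
    have h := hvode t ht k
    have hexp : ∑ i, B i k * (lamv t i - lambar i)
        = ∑ i, B i k * lamv t i := by
      simp [mul_sub, Finset.sum_sub_distrib, hlambar k]
    rw [hexp, h]
    push_cast
    ring
  have elam2 : (1/2 : ℝ) * ∑ i, (((2:ℕ):ℝ) * (lamv t i - lambar i) ^ 1 * lam' t i)
      = ∑ i, ((lamv t i - lambar i) * ∑ k, B i k * (v t k - vbar k)
          - (lamv t i - lambar i) * (θ t i - θbar i)) := by
    rw [Finset.mul_sum]
    refine Finset.sum_congr rfl fun i _ => ?_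
    have h := hlamode t ht i
    have hexp : ∑ k, B i k * (v t k - vbar k)
        = ∑ k, B i k * v t k - ∑ k, B i k * vbar k := by
      simp [mul_sub, Finset.sum_sub_distrib]
    rw [hexp]
    push_cast
    linear_combination (lamv t i - lambar i) * h + (lamv t i - lambar i) * hvbar i
  rw [eP, eθ, ev, elam2]
  have hcancel : ∑ k, (v t k - vbar k) * ∑ i, B i k * (lamv t i - lambar i)
      = ∑ i, (lamv t i - lambar i) * ∑ k, B i k * (v t k - vbar k) := by
    simp_rw [Finset.mul_sum]
    rw [Finset.sum_comm]
    exact Finset.sum_congr rfl fun i _ => Finset.sum_congr rfl fun k _ => by ring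
  rw [hcancel]
  have hsplit : ∑ i, ((lamv t i - lambar i) * ∑ k, B i k * (v t k - vbar k)
        - (lamv t i - lambar i) * (θ t i - θbar i))
      = ∑ i, (lamv t i - lambar i) * ∑ k, B i k * (v t k - vbar k)
        - ∑ i, (lamv t i - lambar i) * (θ t i - θbar i) :=
    Finset.sum_sub_distrib _ _
  have hmerge : (∑ i, (-((M2 i + M3 i) / M1 i) * ((P t i - Pbar i) * (P t i - θ t i))
          - (P t i - Pbar i) * f t i))
      + (∑ i, (((M2 i + M3 i) / M1 i) * ((θ t i - θbar i) * (P t i - θ t i))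
          - (θ t i - θbar i) * (gradC (θ t) i - lamv t i)))
      - ∑ i, (lamv t i - lambar i) * (θ t i - θbar i)
      = ∑ i, ((-((M2 i + M3 i) / M1 i) * ((P t i - Pbar i) * (P t i - θ t i))
          - (P t i - Pbar i) * f t i)
        + (((M2 i + M3 i) / M1 i) * ((θ t i - θbar i) * (P t i - θ t i))
          - (θ t i - θbar i) * (gradC (θ t) i - lamv t i))
        - (lamv t i - lambar i) * (θ t i - θbar i)) := by
    rw [← Finset.sum_add_distrib, ← Finset.sum_sub_distrib]
  have hlhs : (-∑ i, ((M2 i + M3 i) / M1 i) * (P t i - θ t i) ^ 2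
        - ∑ i, (θ t i - θbar i) * (gradC (θ t) i - gradC θbar i)
        - ∑ i, (P t i - Pbar i) * f t i)
      = ∑ i, (-(((M2 i + M3 i) / M1 i) * (P t i - θ t i) ^ 2)
          - (θ t i - θbar i) * (gradC (θ t) i - gradC θbar i)
          - (P t i - Pbar i) * f t i) := by
    simp [Finset.sum_sub_distrib, Finset.sum_neg]
  have hfin : ∀ i : Fin n, ((-((M2 i + M3 i) / M1 i) * ((P t i - Pbar i) * (P t i - θ t i))
          - (P t i - Pbar i) * f t i)
        + (((M2 i + M3 i) / M1 i) * ((θ t i - θbar i) * (P t i - θ t i))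
          - (θ t i - θbar i) * (gradC (θ t) i - lamv t i))
        - (lamv t i - lambar i) * (θ t i - θbar i))
      = (-(((M2 i + M3 i) / M1 i) * (P t i - θ t i) ^ 2)
          - (θ t i - θbar i) * (gradC (θ t) i - gradC θbar i)
          - (P t i - Pbar i) * f t i) := by
    intro i
    rw [hPbar i, hgradbar i]
    ring
  have hsum : ∑ i, ((-((M2 i + M3 i) / M1 i) * ((P t i - Pbar i) * (P t i - θ t i))
          - (P t i - Pbar i) * f t i)
        + (((M2 i + M3 i) / M1 i) * ((θ t i - θbar i) * (P t i - θ t i))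
          - (θ t i - θbar i) * (gradC (θ t) i - lamv t i))
        - (lamv t i - lambar i) * (θ t i - θbar i))
      = ∑ i, (-(((M2 i + M3 i) / M1 i) * (P t i - θ t i) ^ 2)
          - (θ t i - θbar i) * (gradC (θ t) i - gradC θbar i)
          - (P t i - Pbar i) * f t i) :=
    Finset.sum_congr rfl fun i _ => hfin i
  linarith [hmerge, hlhs, hsum, hsplit]
end

section
/- (Dissipation of the total storage along the closed loop) Let n ≥ 1, let G and G^{com} be simple graphs on {1,…,n} with neighbor sets N_i and N_i^{com}, and write (Lx)_i = Σ_{j∈N_i^{com}}(x_i − x_j). Suppose X_{di} > X'_{di}, B_{ij} = B_{ji} < 0 for i ≠ j adjacent in G (B_{ij}=0 otherwise), B_{ii} = Σ_{j∈N_i}B_{ij}, and T_{pi}, K_{pi}, T_{Vi}, T_{ti}, T_{θi}, Q_i, M_{1i}, M_{3i} > 0, M_{2i} ≥ 0, M_{4i} = −(M_{2i}+M_{3i}), R_i, Ē_{fi}, P_{di} ∈ ℝ for all i. Let δ, f, V, P, θ : I → ℝ^n be differentiable on an open interval I, satisfying for all t, i: δ̇_i = f_i; T_{pi}ḟ_i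 = −f_i + K_{pi}(P_i − P_{di} + Σ_{j∈N_i}V_iV_jB_{ij}sin(δ_i − δ_j)); T_{Vi}V̇_i = Ē_{fi} − (1 − (X_{di}−X'_{di})B_{ii})V_i − (X_{di}−X'_{di})Σ_{j∈N_i}V_jB_{ij}cos(δ_i − δ_j); M_{3i}T_{ti}Ṗ_i = −(M_{2i}+M_{3i})P_i − M_{4i}θ_i − M_{1i}f_i; T_{θi}θ̇_i = −θ_i + P_i − (M_{1i}Q_i/(M_{2i}+M_{3i}))(L(Qθ+R))_i. Let δ̄, V̄, P̄, θ̄ ∈ ℝ^n be constants with f̄ = 0, P̄ = θ̄, satisfying for all i: 0 = P̄_i − P_{di} + Σ_{j∈N_i}V̄_iV̄_jB_{ij}sin(δ̄_i − δ̄_j); 0 = Ē_{fi} − (1 − (X_{di}−X'_{di})B_{ii})V̄_i − (X_{di}−X'_{di})Σ_{j∈N_i}V̄_jB_{ij}cos(δ̄_i − δ̄_j); (L(Qθ̄+R))_i = 0. Then t ↦ 𝒮₁(δ(t),f(t),V(t)) + S₂(t) is differentiable on I with derivative −Σ_i f_i²/K_{pi} − Σ_i(T_{Vi}/(X_{di}−X'_{di}))V̇_i²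 − Σ_i((M_{2i}+M_{3i})/M_{1i})(P_i−θ_i)² − Σ_{{i,j}∈E(G^{com})}(Q_i(θ_i−θ̄_i) − Q_j(θ_j−θ̄_j))², which is ≤ 0 for all t ∈ I. -/
open Finset

lemma sumswap {n : ℕ} (G : SimpleGraph (Fin n)) [DecidableRel G.Adj] (g : Fin n → Fin n → ℝ) :
    ∑ i, ∑ j ∈ G.neighborFinset i, g i j = ∑ i, ∑ j ∈ G.neighborFinset i, g j i := by
  have h : ∀ (g : Fin n → Fin n → ℝ), ∑ i, ∑ j ∈ G.neighborFinset i, g i j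
      = ∑ i : Fin n, ∑ j : Fin n, if G.Adj i j then g i j else 0 := by
    intro g
    refine Finset.sum_congr rfl fun i _ => ?_
    rw [SimpleGraph.neighborFinset_eq_filter, Finset.sum_filter]
  rw [h, h, Finset.sum_comm]
  refine Finset.sum_congr rfl fun i _ => Finset.sum_congr rfl fun j _ => ?_
  by_cases hadj : G.Adj i j
  · rw [if_pos hadj.symm, if_pos hadj]
  · rw [if_neg (fun h' => hadj h'.symm), if_neg hadj]

lemma halfsum {n : ℕ} (G : SimpleGraph (Fin n)) [DecidableRel G.Adj]
    (c : Fin n → Fin n → ℝ) (w : Fin n → ℝ)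
    (hanti : ∀ i j, G.Adj i j → c j i = - c i j) :
    (1/2) * ∑ i, ∑ j ∈ G.neighborFinset i, c i j * (w i - w j)
      = ∑ i, w i * ∑ j ∈ G.neighborFinset i, c i j := by
  have h1 : ∑ i, ∑ j ∈ G.neighborFinset i, c i j * w j
      = - ∑ i, ∑ j ∈ G.neighborFinset i, c i j * w i := by
    rw [sumswap G (fun i j => c i j * w j), ← Finset.sum_neg_distrib]
    refine Finset.sum_congr rfl fun i _ => ?_
    rw [← Finset.sum_neg_distrib]
    refine Finset.sum_congr rfl fun j hj => ?_
    have hadj : G.Adj i j := by simpa using hj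
    rw [hanti i j hadj]; ring
  have h2 : ∑ i, ∑ j ∈ G.neighborFinset i, c i j * (w i - w j)
      = ∑ i, ∑ j ∈ G.neighborFinset i, c i j * w i
        - ∑ i, ∑ j ∈ G.neighborFinset i, c i j * w j := by
    rw [← Finset.sum_sub_distrib]
    refine Finset.sum_congr rfl fun i _ => ?_
    rw [← Finset.sum_sub_distrib]
    exact Finset.sum_congr rfl fun j _ => by ring
  have h3 : ∑ i, w i * ∑ j ∈ G.neighborFinset i, c i j
      = ∑ i, ∑ j ∈ G.neighborFinset i, c i j * w i := by
    refine Finset.sum_congr rfl fun i _ => ?_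
    rw [Finset.mul_sum]
    exact Finset.sum_congr rfl fun j _ => by ring
  linarith

lemma laplacian_quad {n : ℕ} (G : SimpleGraph (Fin n)) [DecidableRel G.Adj] (y : Fin n → ℝ) :
    ∑ i, y i * ∑ j ∈ G.neighborFinset i, (y i - y j)
      = (1/2) * ∑ i, ∑ j ∈ G.neighborFinset i, (y i - y j)^2 := by
  have h := sumswap G (fun i j => (y i - y j) * y j)
  have e1 : ∑ i, ∑ j ∈ G.neighborFinset i, (y i - y j)^2
      = ∑ i, ∑ j ∈ G.neighborFinset i, (y i - y j) * y i
        - ∑ i, ∑ j ∈ G.neighborFinset i, (y i - y j) * y j := by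
    rw [← Finset.sum_sub_distrib]
    refine Finset.sum_congr rfl fun i _ => ?_
    rw [← Finset.sum_sub_distrib]
    exact Finset.sum_congr rfl fun j _ => by ring
  have e2 : ∑ i, ∑ j ∈ G.neighborFinset i, ((y j - y i) * y i)
      = - ∑ i, ∑ j ∈ G.neighborFinset i, (y i - y j) * y i := by
    rw [← Finset.sum_neg_distrib]
    refine Finset.sum_congr rfl fun i _ => ?_
    rw [← Finset.sum_neg_distrib]
    exact Finset.sum_congr rfl fun j _ => by ring
  have e3 : ∑ i, y i * ∑ j ∈ G.neighborFinset i, (y i - y j)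
      = ∑ i, ∑ j ∈ G.neighborFinset i, (y i - y j) * y i := by
    refine Finset.sum_congr rfl fun i _ => ?_
    rw [Finset.mul_sum]
    exact Finset.sum_congr rfl fun j _ => by ring
  linarith
/-- Dissipation of the total storage along the closed loop: along solutions of
the flux-decay power network model interconnected with the turbine dynamics reduced to the
sliding manifold and the distributed consensus controller on the communication graph `Gc`,
and with respect to a closed-loop steady state `(δ̄, f̄ = 0, V̄, P̄ = θ̄, θ̄)`, the total
storage `𝒮₁ + S₂` is differentiable with nonpositive derivative
`-∑ i f i²/Kp i - ∑ i (TV i/(Xd i - Xd' i)) V̇ i² - ∑ i ((M2 i + M3 i)/M1 i)(P i - θ i)²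
 - ∑_{edges {i,j} of Gc} (Q i (θ i - θ̄ i) - Q j (θ j - θ̄ j))²`;
the sum over unordered edges (each counted once) is written as half the double sum over
ordered adjacent pairs, the summand being symmetric. -/
theorem stmt11 (n : ℕ) (hn : 1 ≤ n)
    (G Gc : SimpleGraph (Fin n)) [DecidableRel G.Adj] [DecidableRel Gc.Adj]
    (Xd Xd' : Fin n → ℝ) (hX : ∀ i, Xd' i < Xd i)
    (B : Fin n → Fin n → ℝ)
    (hBsym : ∀ i j, G.Adj i j → B i j = B j i)
    (hBneg : ∀ i j, G.Adj i j → B i j < 0)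
    (hBzero : ∀ i j, i ≠ j → ¬ G.Adj i j → B i j = 0)
    (hBii : ∀ i, B i i = ∑ j ∈ G.neighborFinset i, B i j)
    (Tp Kp TV Tt Tθ Q M1 M2 M3 M4 R Ef Pd : Fin n → ℝ)
    (hTp : ∀ i, 0 < Tp i) (hKp : ∀ i, 0 < Kp i) (hTV : ∀ i, 0 < TV i)
    (hTt : ∀ i, 0 < Tt i) (hTθ : ∀ i, 0 < Tθ i) (hQ : ∀ i, 0 < Q i)
    (hM1 : ∀ i, 0 < M1 i) (hM2 : ∀ i, 0 ≤ M2 i) (hM3 : ∀ i, 0 < M3 i)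
    (hM4 : ∀ i, M4 i = -(M2 i + M3 i))
    (a b : ℝ)
    (δ f V P θ f' V' P' θ' : ℝ → Fin n → ℝ)
    (hδ : ∀ t ∈ Set.Ioo a b, ∀ i, HasDerivAt (fun s => δ s i) (f t i) t)
    (hf : ∀ t ∈ Set.Ioo a b, ∀ i, HasDerivAt (fun s => f s i) (f' t i) t)
    (hV : ∀ t ∈ Set.Ioo a b, ∀ i, HasDerivAt (fun s => V s i) (V' t i) t)
    (hP : ∀ t ∈ Set.Ioo a b, ∀ i, HasDerivAt (fun s => P s i) (P' t i) t)
    (hθ : ∀ t ∈ Set.Ioo a b, ∀ i, HasDerivAt (fun s => θ s i) (θ' t i) t)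
    (hfode : ∀ t ∈ Set.Ioo a b, ∀ i, Tp i * f' t i =
      -f t i + Kp i * (P t i - Pd i +
        ∑ j ∈ G.neighborFinset i, V t i * V t j * B i j * Real.sin (δ t i - δ t j)))
    (hVode : ∀ t ∈ Set.Ioo a b, ∀ i, TV i * V' t i =
      Ef i - (1 - (Xd i - Xd' i) * B i i) * V t i -
        (Xd i - Xd' i) * ∑ j ∈ G.neighborFinset i, V t j * B i j * Real.cos (δ t i - δ t j))
    (hPode : ∀ t ∈ Set.Ioo a b, ∀ i, M3 i * Tt i * P' t i =
      -(M2 i + M3 i) * P t i - M4 i * θ t i - M1 i * f t i)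
    (hθode : ∀ t ∈ Set.Ioo a b, ∀ i, Tθ i * θ' t i =
      -θ t i + P t i - (M1 i * Q i / (M2 i + M3 i)) *
        ∑ j ∈ Gc.neighborFinset i, ((Q i * θ t i + R i) - (Q j * θ t j + R j)))
    (δbar Vbar Pbar θbar : Fin n → ℝ)
    (hPbareq : ∀ i, Pbar i = θbar i)
    (hss1 : ∀ i, 0 = Pbar i - Pd i +
      ∑ j ∈ G.neighborFinset i, Vbar i * Vbar j * B i j * Real.sin (δbar i - δbar j))
    (hss2 : ∀ i, 0 = Ef i - (1 - (Xd i - Xd' i) * B i i) * Vbar i -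
      (Xd i - Xd' i) * ∑ j ∈ G.neighborFinset i,
        Vbar j * B i j * Real.cos (δbar i - δbar j))
    (hss3 : ∀ i, ∑ j ∈ Gc.neighborFinset i,
      ((Q i * θbar i + R i) - (Q j * θbar j + R j)) = 0) :
    ∀ t ∈ Set.Ioo a b,
      HasDerivAt
        (fun s => storage1 n G B Xd Xd' Tp Kp δbar (fun _ => 0) Vbar (δ s) (f s) (V s)
          + ((1 / 2) * ∑ i, (M3 i * Tt i / M1 i) * (P s i - Pbar i) ^ 2
            + (1 / 2) * ∑ i, ((M2 i + M3 i) * Tθ i / M1 i) * (θ s i - θbar i) ^ 2))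
        (-∑ i, (f t i) ^ 2 / Kp i
          - ∑ i, (TV i / (Xd i - Xd' i)) * (V' t i) ^ 2
          - ∑ i, ((M2 i + M3 i) / M1 i) * (P t i - θ t i) ^ 2
          - (1 / 2) * ∑ i, ∑ j ∈ Gc.neighborFinset i,
              (Q i * (θ t i - θbar i) - Q j * (θ t j - θbar j)) ^ 2) t ∧
      (-∑ i, (f t i) ^ 2 / Kp i
          - ∑ i, (TV i / (Xd i - Xd' i)) * (V' t i) ^ 2
          - ∑ i, ((M2 i + M3 i) / M1 i) * (P t i - θ t i) ^ 2
          - (1 / 2) * ∑ i, ∑ j ∈ Gc.neighborFinset i,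
              (Q i * (θ t i - θbar i) - Q j * (θ t j - θbar j)) ^ 2) ≤ 0 := by
  intro t ht
  have hδt := hδ t ht
  have hft := hf t ht
  have hVt := hV t ht
  have hPt := hP t ht
  have hθt := hθ t ht
  have hΔ : ∀ i, (0:ℝ) < Xd i - Xd' i := fun i => sub_pos.2 (hX i)
  have hM23 : ∀ i, (0:ℝ) < M2 i + M3 i := fun i => add_pos_of_nonneg_of_pos (hM2 i) (hM3 i)
  -- symmetry of Emat
  have hEsym : ∀ (d : Fin n → ℝ) (i j : Fin n),
      Emat n B Xd Xd' d i j = Emat n B Xd Xd' d j i := by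
    intro d i j
    unfold Emat
    by_cases hij : i = j
    · subst hij; rfl
    · rw [if_neg hij, if_neg (Ne.symm hij)]
      by_cases hadj : G.Adj i j
      · rw [← hBsym i j hadj, show d j - d i = -(d i - d j) by ring, Real.cos_neg]
      · rw [hBzero i j hij hadj, hBzero j i (Ne.symm hij) (fun h => hadj h.symm)]
        ring
  -- row sums of Emat
  have hrow : ∀ (d W : Fin n → ℝ) (i : Fin n), ∑ j, Emat n B Xd Xd' d i j * W j
      = (1/(Xd i - Xd' i) - B i i) * W i
        + ∑ j ∈ G.neighborFinset i, W j * B i j * Real.cos (d i - d j) := by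
    intro d W i
    rw [← Finset.add_sum_erase Finset.univ (fun j => Emat n B Xd Xd' d i j * W j)
      (Finset.mem_univ i)]
    congr 1
    · unfold Emat; rw [if_pos rfl]
    · have hsub : G.neighborFinset i ⊆ Finset.univ.erase i := by
        intro j hj
        have hadj : G.Adj i j := by simpa using hj
        exact Finset.mem_erase.2 ⟨hadj.ne', Finset.mem_univ j⟩
      have hz : ∀ j ∈ Finset.univ.erase i, j ∉ G.neighborFinset i →
          Emat n B Xd Xd' d i j * W j = 0 := by
        intro j hj hjn
        have hij : i ≠ j := Ne.symm (Finset.mem_erase.1 hj).1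
        have hadj : ¬ G.Adj i j := fun h => hjn (by simpa using h)
        unfold Emat
        rw [if_neg hij, hBzero i j hij hadj]
        ring
      rw [← Finset.sum_subset hsub hz]
      refine Finset.sum_congr rfl fun j hj => ?_
      have hadj : G.Adj i j := by simpa using hj
      unfold Emat
      rw [if_neg hadj.ne]
      ring
  -- the V-row identities
  have hVrow : ∀ i, (Xd i - Xd' i) * ∑ j, Emat n B Xd Xd' (δ t) i j * V t j
      = Ef i - TV i * V' t i := by
    intro i
    rw [hrow (δ t) (V t) i]
    have h := hVode t ht i
    have e : (Xd i - Xd' i) * ((1/(Xd i - Xd' i) - B i i) * V t i)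
        = V t i - (Xd i - Xd' i) * B i i * V t i := by
      field_simp [(hΔ i).ne']
    rw [mul_add, e]
    linear_combination h
  have hVrowbar : ∀ i, (Xd i - Xd' i) * ∑ j, Emat n B Xd Xd' δbar i j * Vbar j = Ef i := by
    intro i
    rw [hrow δbar Vbar i]
    have h := hss2 i
    have e : (Xd i - Xd' i) * ((1/(Xd i - Xd' i) - B i i) * Vbar i)
        = Vbar i - (Xd i - Xd' i) * B i i * Vbar i := by
      field_simp [(hΔ i).ne']
    rw [mul_add, e]
    linear_combination h
  -- per-entry derivative of the quadratic form
  have h2e : ∀ (i j : Fin n), HasDerivAt (fun s => V s i * Emat n B Xd Xd' (δ s) i j * V s j)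
      (V' t i * Emat n B Xd Xd' (δ t) i j * V t j
        + V t i * (if i = j then 0 else
            B i j * (-Real.sin (δ t i - δ t j) * (f t i - f t j))) * V t j
        + V t i * Emat n B Xd Xd' (δ t) i j * V' t j) t := by
    intro i j
    by_cases hij : i = j
    · subst hij
      have hE : ∀ d : Fin n → ℝ, Emat n B Xd Xd' d i i = 1 / (Xd i - Xd' i) - B i i :=
        fun d => if_pos rfl
      simp only [hE]
      have h := ((hVt i).mul_const (1 / (Xd i - Xd' i) - B i i)).fun_mul (hVt i)
      refine h.congr_deriv ?_
      simp only [eq_self_iff_true, if_true]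
      ring
    · simp only [Emat, if_neg hij]
      have hsub : HasDerivAt (fun s => δ s i - δ s j) (f t i - f t j) t := (hδt i).sub (hδt j)
      have hcos : HasDerivAt (fun s => Real.cos (δ s i - δ s j))
          (-Real.sin (δ t i - δ t j) * (f t i - f t j)) t := hsub.cos
      have h := ((hVt i).fun_mul (hcos.const_mul (B i j))).fun_mul (hVt j)
      refine h.congr_deriv ?_
      ring
  -- derivatives of the individual pieces
  have h1 : HasDerivAt (fun s => (1/2) * ∑ i, (Tp i / Kp i) * (f s i - (0:ℝ))^2)
      (∑ i, (Tp i / Kp i) * (f t i * f' t i)) t := by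
    have h := HasDerivAt.const_mul ((1:ℝ)/2)
      (HasDerivAt.fun_sum (fun i (_ : i ∈ Finset.univ) =>
        (((hft i).sub_const (0:ℝ)).fun_pow 2).const_mul (Tp i / Kp i)))
    refine h.congr_deriv ?_
    rw [Finset.mul_sum]
    refine Finset.sum_congr rfl fun i _ => ?_
    push_cast
    ring
  have h2 : HasDerivAt (fun s => (1/2) * ∑ i, ∑ j, V s i * Emat n B Xd Xd' (δ s) i j * V s j)
      ((1/2) * ∑ i, ∑ j, (V' t i * Emat n B Xd Xd' (δ t) i j * V t j
        + V t i * (if i = j then 0 else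
            B i j * (-Real.sin (δ t i - δ t j) * (f t i - f t j))) * V t j
        + V t i * Emat n B Xd Xd' (δ t) i j * V' t j)) t := by
    exact HasDerivAt.const_mul ((1:ℝ)/2)
      (HasDerivAt.fun_sum (fun i (_ : i ∈ Finset.univ) =>
        HasDerivAt.fun_sum (fun j (_ : j ∈ Finset.univ) => h2e i j)))
  have h4 : HasDerivAt (fun s => ∑ i, (∑ j, Emat n B Xd Xd' δbar i j * Vbar j) * (V s i - Vbar i))
      (∑ i, (∑ j, Emat n B Xd Xd' δbar i j * Vbar j) * V' t i) t := by
    exact HasDerivAt.fun_sum (fun i (_ : i ∈ Finset.univ) =>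
      ((hVt i).sub_const (Vbar i)).const_mul _)
  have h5 : HasDerivAt (fun s => (1/2) * ∑ i, ∑ j ∈ G.neighborFinset i,
        B i j * Vbar i * Vbar j * Real.sin (δbar i - δbar j)
          * ((δ s i - δ s j) - (δbar i - δbar j)))
      ((1/2) * ∑ i, ∑ j ∈ G.neighborFinset i,
        B i j * Vbar i * Vbar j * Real.sin (δbar i - δbar j) * (f t i - f t j)) t := by
    exact HasDerivAt.const_mul ((1:ℝ)/2)
      (HasDerivAt.fun_sum (fun i (_ : i ∈ Finset.univ) =>
        HasDerivAt.fun_sum (fun j (_ : j ∈ G.neighborFinset i) =>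
          ((((hδt i).fun_sub (hδt j)).sub_const (δbar i - δbar j)).const_mul _))))
  have h6 : HasDerivAt (fun s => (1/2) * ∑ i, (M3 i * Tt i / M1 i) * (P s i - Pbar i)^2)
      (∑ i, (M3 i * Tt i / M1 i) * ((P t i - Pbar i) * P' t i)) t := by
    have h := HasDerivAt.const_mul ((1:ℝ)/2)
      (HasDerivAt.fun_sum (fun i (_ : i ∈ Finset.univ) =>
        (((hPt i).sub_const (Pbar i)).fun_pow 2).const_mul (M3 i * Tt i / M1 i)))
    refine h.congr_deriv ?_
    rw [Finset.mul_sum]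
    refine Finset.sum_congr rfl fun i _ => ?_
    push_cast
    ring
  have h7 : HasDerivAt (fun s => (1/2) * ∑ i, ((M2 i + M3 i) * Tθ i / M1 i) * (θ s i - θbar i)^2)
      (∑ i, ((M2 i + M3 i) * Tθ i / M1 i) * ((θ t i - θbar i) * θ' t i)) t := by
    have h := HasDerivAt.const_mul ((1:ℝ)/2)
      (HasDerivAt.fun_sum (fun i (_ : i ∈ Finset.univ) =>
        (((hθt i).sub_const (θbar i)).fun_pow 2).const_mul ((M2 i + M3 i) * Tθ i / M1 i)))
    refine h.congr_deriv ?_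
    rw [Finset.mul_sum]
    refine Finset.sum_congr rfl fun i _ => ?_
    push_cast
    ring
  -- per-node scalar identities from the ODEs
  have eA : ∀ i, (Tp i / Kp i) * (f t i * f' t i)
      = -((f t i)^2 / Kp i) + f t i * (P t i - Pd i)
        + f t i * ∑ j ∈ G.neighborFinset i, V t i * V t j * B i j * Real.sin (δ t i - δ t j) := by
    intro i
    have h' : f' t i = (-f t i + Kp i * (P t i - Pd i +
        ∑ j ∈ G.neighborFinset i, V t i * V t j * B i j * Real.sin (δ t i - δ t j))) / Tp i := by
      rw [eq_div_iff (hTp i).ne']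
      linear_combination hfode t ht i
    rw [h']
    field_simp [(hTp i).ne', (hKp i).ne']
    ring
  have eB : ∀ i, V' t i * (∑ j, Emat n B Xd Xd' (δ t) i j * V t j)
      - (∑ j, Emat n B Xd Xd' δbar i j * Vbar j) * V' t i
      = -((TV i / (Xd i - Xd' i)) * (V' t i) ^ 2) := by
    intro i
    have h1' : (∑ j, Emat n B Xd Xd' (δ t) i j * V t j)
        = (Ef i - TV i * V' t i) / (Xd i - Xd' i) := by
      rw [eq_div_iff (hΔ i).ne']
      linear_combination hVrow i
    have h2' : (∑ j, Emat n B Xd Xd' δbar i j * Vbar j) = Ef i / (Xd i - Xd' i) := by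
      rw [eq_div_iff (hΔ i).ne']
      linear_combination hVrowbar i
    rw [h1', h2']
    field_simp [(hΔ i).ne']
    ring
  have eC : ∀ i, (M3 i * Tt i / M1 i) * ((P t i - Pbar i) * P' t i)
      = -(((M2 i + M3 i) / M1 i) * ((P t i - Pbar i) * (P t i - θ t i)))
        - f t i * (P t i - Pbar i) := by
    intro i
    have h := hPode t ht i
    rw [hM4 i] at h
    have h' : P' t i = (-(M2 i + M3 i) * P t i + (M2 i + M3 i) * θ t i - M1 i * f t i)
        / (M3 i * Tt i) := by
      rw [eq_div_iff (mul_ne_zero (hM3 i).ne' (hTt i).ne')]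
      linear_combination h
    rw [h']
    field_simp [(hM1 i).ne', (hM3 i).ne', (hTt i).ne']
    ring
  have hLi : ∀ i, ∑ j ∈ Gc.neighborFinset i, (Q i * θ t i + R i - (Q j * θ t j + R j))
      = ∑ j ∈ Gc.neighborFinset i, (Q i * (θ t i - θbar i) - Q j * (θ t j - θbar j)) := by
    intro i
    calc ∑ j ∈ Gc.neighborFinset i, (Q i * θ t i + R i - (Q j * θ t j + R j))
        = ∑ j ∈ Gc.neighborFinset i, ((Q i * (θ t i - θbar i) - Q j * (θ t j - θbar j))
            + (Q i * θbar i + R i - (Q j * θbar j + R j))) :=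
          Finset.sum_congr rfl fun j _ => by ring
      _ = ∑ j ∈ Gc.neighborFinset i, (Q i * (θ t i - θbar i) - Q j * (θ t j - θbar j))
            + ∑ j ∈ Gc.neighborFinset i, (Q i * θbar i + R i - (Q j * θbar j + R j)) :=
          Finset.sum_add_distrib
      _ = _ := by rw [hss3 i, add_zero]
  have eD : ∀ i, ((M2 i + M3 i) * Tθ i / M1 i) * ((θ t i - θbar i) * θ' t i)
      = ((M2 i + M3 i) / M1 i) * ((θ t i - θbar i) * (P t i - θ t i))
        - Q i * (θ t i - θbar i) * ∑ j ∈ Gc.neighborFinset i,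
            (Q i * (θ t i - θbar i) - Q j * (θ t j - θbar j)) := by
    intro i
    have h := hθode t ht i
    rw [hLi i] at h
    have h' : θ' t i = (-θ t i + P t i - M1 i * Q i / (M2 i + M3 i) *
        ∑ j ∈ Gc.neighborFinset i, (Q i * (θ t i - θbar i) - Q j * (θ t j - θbar j))) / Tθ i := by
      rw [eq_div_iff (hTθ i).ne']
      linear_combination h
    rw [h']
    field_simp [(hM1 i).ne', (hM23 i).ne', (hTθ i).ne']
    ring
  -- sum-level identities
  have hsum1 : ∑ i, (Tp i / Kp i) * (f t i * f' t i)
      = -∑ i, (f t i)^2 / Kp i + ∑ i, f t i * (P t i - Pd i)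
        + ∑ i, f t i * ∑ j ∈ G.neighborFinset i,
            V t i * V t j * B i j * Real.sin (δ t i - δ t j) := by
    calc ∑ i, (Tp i / Kp i) * (f t i * f' t i)
        = ∑ i, (-((f t i)^2 / Kp i) + f t i * (P t i - Pd i)
            + f t i * ∑ j ∈ G.neighborFinset i,
                V t i * V t j * B i j * Real.sin (δ t i - δ t j)) :=
          Finset.sum_congr rfl fun i _ => eA i
      _ = _ := by rw [Finset.sum_add_distrib, Finset.sum_add_distrib, Finset.sum_neg_distrib]
  have hsplit : ∀ (F1 F2 F3 : Fin n → Fin n → ℝ),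
      ∑ i : Fin n, ∑ j : Fin n, (F1 i j + F2 i j + F3 i j)
        = (∑ i : Fin n, ∑ j : Fin n, F1 i j) + (∑ i : Fin n, ∑ j : Fin n, F2 i j)
          + (∑ i : Fin n, ∑ j : Fin n, F3 i j) := by
    intro F1 F2 F3
    rw [← Finset.sum_add_distrib, ← Finset.sum_add_distrib]
    refine Finset.sum_congr rfl fun i _ => ?_
    rw [← Finset.sum_add_distrib, ← Finset.sum_add_distrib]
  have hsum2 := hsplit (fun i j => V' t i * Emat n B Xd Xd' (δ t) i j * V t j)
    (fun i j => V t i * (if i = j then 0 else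
        B i j * (-Real.sin (δ t i - δ t j) * (f t i - f t j))) * V t j)
    (fun i j => V t i * Emat n B Xd Xd' (δ t) i j * V' t j)
  have hSc : (∑ i : Fin n, ∑ j : Fin n, V t i * Emat n B Xd Xd' (δ t) i j * V' t j)
      = ∑ i : Fin n, ∑ j : Fin n, V' t i * Emat n B Xd Xd' (δ t) i j * V t j := by
    rw [Finset.sum_comm]
    refine Finset.sum_congr rfl fun i _ => Finset.sum_congr rfl fun j _ => ?_
    rw [hEsym (δ t) j i]
    ring
  have hSa : (∑ i : Fin n, ∑ j : Fin n, V' t i * Emat n B Xd Xd' (δ t) i j * V t j)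
      = ∑ i, V' t i * ∑ j, Emat n B Xd Xd' (δ t) i j * V t j := by
    refine Finset.sum_congr rfl fun i _ => ?_
    rw [Finset.mul_sum]
    exact Finset.sum_congr rfl fun j _ => by ring
  have hSaD4 : (∑ i, V' t i * ∑ j, Emat n B Xd Xd' (δ t) i j * V t j)
      - (∑ i, (∑ j, Emat n B Xd Xd' δbar i j * Vbar j) * V' t i)
      = -∑ i, (TV i / (Xd i - Xd' i)) * (V' t i) ^ 2 := by
    rw [← Finset.sum_sub_distrib, ← Finset.sum_neg_distrib]
    exact Finset.sum_congr rfl fun i _ => eB i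
  have hhalf2 := halfsum G (fun i j => -(V t i * V t j * B i j * Real.sin (δ t i - δ t j))) (f t)
    (by
      intro i j hadj
      rw [← hBsym i j hadj, show δ t j - δ t i = -(δ t i - δ t j) by ring, Real.sin_neg]
      ring)
  have hstep : ∀ i, (∑ j : Fin n, V t i * (if i = j then 0 else
        B i j * (-Real.sin (δ t i - δ t j) * (f t i - f t j))) * V t j)
      = ∑ j ∈ G.neighborFinset i,
          -(V t i * V t j * B i j * Real.sin (δ t i - δ t j)) * (f t i - f t j) := by
    intro i
    have hz : ∀ j ∈ Finset.univ, j ∉ G.neighborFinset i →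
        V t i * (if i = j then 0 else
          B i j * (-Real.sin (δ t i - δ t j) * (f t i - f t j))) * V t j = 0 := by
      intro j _ hj
      by_cases hij : i = j
      · rw [if_pos hij]; ring
      · have hadj : ¬ G.Adj i j := fun h => hj (by simpa using h)
        rw [if_neg hij, hBzero i j hij hadj]; ring
    rw [← Finset.sum_subset (Finset.subset_univ (G.neighborFinset i)) hz]
    refine Finset.sum_congr rfl fun j hj => ?_
    have hadj : G.Adj i j := by simpa using hj
    rw [if_neg hadj.ne]
    ring
  have hneg : (∑ i, f t i * ∑ j ∈ G.neighborFinset i,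
        -(V t i * V t j * B i j * Real.sin (δ t i - δ t j)))
      = -(∑ i, f t i * ∑ j ∈ G.neighborFinset i,
          V t i * V t j * B i j * Real.sin (δ t i - δ t j)) := by
    rw [← Finset.sum_neg_distrib]
    refine Finset.sum_congr rfl fun i _ => ?_
    rw [Finset.sum_neg_distrib]
    ring
  have hSb : (∑ i : Fin n, ∑ j : Fin n, V t i * (if i = j then 0 else
        B i j * (-Real.sin (δ t i - δ t j) * (f t i - f t j))) * V t j)
      = -(2 * ∑ i, f t i * ∑ j ∈ G.neighborFinset i,
          V t i * V t j * B i j * Real.sin (δ t i - δ t j)) := by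
    calc (∑ i : Fin n, ∑ j : Fin n, V t i * (if i = j then 0 else
          B i j * (-Real.sin (δ t i - δ t j) * (f t i - f t j))) * V t j)
        = ∑ i, ∑ j ∈ G.neighborFinset i,
            -(V t i * V t j * B i j * Real.sin (δ t i - δ t j)) * (f t i - f t j) :=
          Finset.sum_congr rfl fun i _ => hstep i
      _ = 2 * ((1/2) * ∑ i, ∑ j ∈ G.neighborFinset i,
            -(V t i * V t j * B i j * Real.sin (δ t i - δ t j)) * (f t i - f t j)) := by ring
      _ = 2 * ∑ i, f t i * ∑ j ∈ G.neighborFinset i,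
            -(V t i * V t j * B i j * Real.sin (δ t i - δ t j)) := by rw [hhalf2]
      _ = _ := by rw [hneg]; ring
  have hhalf5 := halfsum G
    (fun i j => B i j * Vbar i * Vbar j * Real.sin (δbar i - δbar j)) (f t)
    (by
      intro i j hadj
      rw [← hBsym i j hadj, show δbar j - δbar i = -(δbar i - δbar j) by ring, Real.sin_neg]
      ring)
  have h5b : ∀ i, ∑ j ∈ G.neighborFinset i,
      B i j * Vbar i * Vbar j * Real.sin (δbar i - δbar j) = Pd i - Pbar i := by
    intro i
    have h := hss1 i
    have e : ∑ j ∈ G.neighborFinset i, B i j * Vbar i * Vbar j * Real.sin (δbar i - δbar j)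
        = ∑ j ∈ G.neighborFinset i, Vbar i * Vbar j * B i j * Real.sin (δbar i - δbar j) :=
      Finset.sum_congr rfl fun j _ => by ring
    rw [e]
    linarith
  have hsum5 : (1/2) * ∑ i, ∑ j ∈ G.neighborFinset i,
        B i j * Vbar i * Vbar j * Real.sin (δbar i - δbar j) * (f t i - f t j)
      = ∑ i, f t i * (Pd i - Pbar i) := by
    rw [hhalf5]
    exact Finset.sum_congr rfl fun i _ => by rw [h5b i]
  have hsum6 : ∑ i, (M3 i * Tt i / M1 i) * ((P t i - Pbar i) * P' t i)
      = -(∑ i, ((M2 i + M3 i) / M1 i) * ((P t i - Pbar i) * (P t i - θ t i)))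
        - ∑ i, f t i * (P t i - Pbar i) := by
    calc ∑ i, (M3 i * Tt i / M1 i) * ((P t i - Pbar i) * P' t i)
        = ∑ i, (-(((M2 i + M3 i) / M1 i) * ((P t i - Pbar i) * (P t i - θ t i)))
            - f t i * (P t i - Pbar i)) := Finset.sum_congr rfl fun i _ => eC i
      _ = _ := by rw [Finset.sum_sub_distrib, Finset.sum_neg_distrib]
  have hsum7 : ∑ i, ((M2 i + M3 i) * Tθ i / M1 i) * ((θ t i - θbar i) * θ' t i)
      = ∑ i, ((M2 i + M3 i) / M1 i) * ((θ t i - θbar i) * (P t i - θ t i))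
        - ∑ i, Q i * (θ t i - θbar i) * ∑ j ∈ Gc.neighborFinset i,
            (Q i * (θ t i - θbar i) - Q j * (θ t j - θbar j)) := by
    calc ∑ i, ((M2 i + M3 i) * Tθ i / M1 i) * ((θ t i - θbar i) * θ' t i)
        = ∑ i, (((M2 i + M3 i) / M1 i) * ((θ t i - θbar i) * (P t i - θ t i))
            - Q i * (θ t i - θbar i) * ∑ j ∈ Gc.neighborFinset i,
                (Q i * (θ t i - θbar i) - Q j * (θ t j - θbar j))) :=
          Finset.sum_congr rfl fun i _ => eD i
      _ = _ := Finset.sum_sub_distrib _ _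
  have hlap := laplacian_quad Gc (fun i => Q i * (θ t i - θbar i))
  have hmerge : -(∑ i, ((M2 i + M3 i) / M1 i) * ((P t i - Pbar i) * (P t i - θ t i)))
      + ∑ i, ((M2 i + M3 i) / M1 i) * ((θ t i - θbar i) * (P t i - θ t i))
      = -∑ i, ((M2 i + M3 i) / M1 i) * (P t i - θ t i) ^ 2 := by
    rw [← Finset.sum_neg_distrib, ← Finset.sum_add_distrib, ← Finset.sum_neg_distrib]
    exact Finset.sum_congr rfl fun i _ => by rw [hPbareq i]; ring
  have hcancel : ∑ i, f t i * (P t i - Pd i) + ∑ i, f t i * (Pd i - Pbar i)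
      - ∑ i, f t i * (P t i - Pbar i) = 0 := by
    rw [← Finset.sum_add_distrib, ← Finset.sum_sub_distrib]
    exact Finset.sum_eq_zero fun i _ => by ring
  have heq : (∑ i, (Tp i / Kp i) * (f t i * f' t i))
      + (1/2) * ∑ i, ∑ j, (V' t i * Emat n B Xd Xd' (δ t) i j * V t j
          + V t i * (if i = j then 0 else
              B i j * (-Real.sin (δ t i - δ t j) * (f t i - f t j))) * V t j
          + V t i * Emat n B Xd Xd' (δ t) i j * V' t j)
      - (∑ i, (∑ j, Emat n B Xd Xd' δbar i j * Vbar j) * V' t i)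
      + (1/2) * ∑ i, ∑ j ∈ G.neighborFinset i,
          B i j * Vbar i * Vbar j * Real.sin (δbar i - δbar j) * (f t i - f t j)
      + ((∑ i, (M3 i * Tt i / M1 i) * ((P t i - Pbar i) * P' t i))
        + (∑ i, ((M2 i + M3 i) * Tθ i / M1 i) * ((θ t i - θbar i) * θ' t i)))
      = -∑ i, (f t i) ^ 2 / Kp i
        - ∑ i, (TV i / (Xd i - Xd' i)) * (V' t i) ^ 2
        - ∑ i, ((M2 i + M3 i) / M1 i) * (P t i - θ t i) ^ 2
        - (1 / 2) * ∑ i, ∑ j ∈ Gc.neighborFinset i,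
            (Q i * (θ t i - θbar i) - Q j * (θ t j - θbar j)) ^ 2 := by
    linarith [hsum1, hsum2, hSc, hSa, hSaD4, hSb, hsum5, hsum6, hsum7, hlap, hmerge, hcancel]
  constructor
  · have hS1 : HasDerivAt
        (fun s => storage1 n G B Xd Xd' Tp Kp δbar (fun _ => 0) Vbar (δ s) (f s) (V s))
        ((∑ i, (Tp i / Kp i) * (f t i * f' t i))
          + (1/2) * ∑ i, ∑ j, (V' t i * Emat n B Xd Xd' (δ t) i j * V t j
              + V t i * (if i = j then 0 else
                  B i j * (-Real.sin (δ t i - δ t j) * (f t i - f t j))) * V t j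
              + V t i * Emat n B Xd Xd' (δ t) i j * V' t j)
          - (∑ i, (∑ j, Emat n B Xd Xd' δbar i j * Vbar j) * V' t i)
          + (1/2) * ∑ i, ∑ j ∈ G.neighborFinset i,
              B i j * Vbar i * Vbar j * Real.sin (δbar i - δbar j) * (f t i - f t j)) t := by
      exact (((h1.fun_add h2).sub_const
        ((1/2) * ∑ i, ∑ j, Vbar i * Emat n B Xd Xd' δbar i j * Vbar j)).fun_sub h4).fun_add h5
    have hF := hS1.fun_add (h6.fun_add h7)
    exact heq ▸ hF
  · have n1 : 0 ≤ ∑ i, (f t i)^2 / Kp i :=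
      Finset.sum_nonneg fun i _ => div_nonneg (sq_nonneg _) (hKp i).le
    have n2 : 0 ≤ ∑ i, (TV i / (Xd i - Xd' i)) * (V' t i)^2 :=
      Finset.sum_nonneg fun i _ => mul_nonneg (div_nonneg (hTV i).le (hΔ i).le) (sq_nonneg _)
    have n3 : 0 ≤ ∑ i, ((M2 i + M3 i) / M1 i) * (P t i - θ t i)^2 :=
      Finset.sum_nonneg fun i _ => mul_nonneg (div_nonneg (hM23 i).le (hM1 i).le) (sq_nonneg _)
    have n4 : 0 ≤ ∑ i, ∑ j ∈ Gc.neighborFinset i,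
        (Q i * (θ t i - θbar i) - Q j * (θ t j - θbar j))^2 :=
      Finset.sum_nonneg fun i _ => Finset.sum_nonneg fun j _ => sq_nonneg _
    linarith
end
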